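/- arXiv:2411.17023 — 3 statements merged into one kernel-verified Lean document; each statement's English description precedes it below -/
import Mathlib

section
/- Let (a_d)_{d≥1} be any sequence of nonnegative reals with a_d·d^{3/2} → 0 as d → ∞. Then there exists a constant C > 0 such that for all d ≥ 1, |Σ_d(a_d)|_{d-1} ≤ C·ω_{d-1}/2^d. -/
open MeasureTheory Filter

/-- `Σ_d(a) = [-a,1]^d ∩ S^{d-1}`: points of the unit sphere in `ℝ^d` all of whose
coordinates are `≥ -a`. -/
def SigmaSet (d : ℕ) (a : ℝ) : Set (EuclideanSpace ℝ (Fin d)) :=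
  {x | x ∈ Metric.sphere (0 : EuclideanSpace ℝ (Fin d)) 1 ∧ ∀ i : Fin d, -a ≤ x i}

open Set Function Real
open scoped ENNReal NNReal

section aux

variable {n : ℕ} (u : EuclideanSpace ℝ (Fin n)) {t : ℝ}

lemma aux_norm_lb (hu : ‖u‖ = t) (x : EuclideanSpace ℝ (Fin n)) (hx : ‖x‖ = 1) :
    1 - t ≤ ‖x + u‖ := by
  have h := norm_sub_norm_le x (-u)
  rw [sub_neg_eq_add, norm_neg, hx, hu] at h
  exact h

lemma aux_norm_ub (hu : ‖u‖ = t) (x : EuclideanSpace ℝ (Fin n)) (hx : ‖x‖ = 1) :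
    ‖x + u‖ ≤ 1 + t := by
  calc ‖x + u‖ ≤ ‖x‖ + ‖u‖ := norm_add_le _ _
    _ = 1 + t := by rw [hx, hu]

lemma aux_norm_pos (hu : ‖u‖ = t) (ht4 : t ≤ 1 / 4) (x : EuclideanSpace ℝ (Fin n))
    (hx : ‖x‖ = 1) : 0 < ‖x + u‖ := by
  have := aux_norm_lb u hu x hx
  linarith

lemma aux_T_norm (hu : ‖u‖ = t) (ht4 : t ≤ 1 / 4) (x : EuclideanSpace ℝ (Fin n))
    (hx : ‖x‖ = 1) : ‖‖x + u‖⁻¹ • (x + u)‖ = 1 := by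
  rw [norm_smul, norm_inv, norm_norm]
  exact inv_mul_cancel₀ (aux_norm_pos u hu ht4 x hx).ne'

set_option maxHeartbeats 1000000 in
/-- The key lower-Lipschitz estimate for the shifted radial projection. -/
lemma aux_key (hu : ‖u‖ = t) (ht0 : 0 < t) (ht4 : t ≤ 1 / 4)
    (x : EuclideanSpace ℝ (Fin n)) (hx : ‖x‖ = 1)
    (y : EuclideanSpace ℝ (Fin n)) (hy : ‖y‖ = 1) :
    dist x y ≤ ((1 - t) * (1 + t) / (1 - 2 * t)) *
      dist (‖x + u‖⁻¹ • (x + u)) (‖y + u‖⁻¹ • (y + u)) := by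
  have hden : 0 < 1 - 2 * t := by linarith
  have hnvpos : 0 < ‖x + u‖ := aux_norm_pos u hu ht4 x hx
  have hnwpos : 0 < ‖y + u‖ := aux_norm_pos u hu ht4 y hy
  have hnvub : ‖x + u‖ ≤ 1 + t := aux_norm_ub u hu x hx
  have hnvlb : 1 - t ≤ ‖x + u‖ := aux_norm_lb u hu x hx
  have hnwlb : 1 - t ≤ ‖y + u‖ := aux_norm_lb u hu y hy
  have hsq : ‖x + u‖ ^ 2 - ‖y + u‖ ^ 2 = 2 * (inner ℝ (x - y) u : ℝ) := by
    have e1 : ‖x + u‖ ^ 2 = ‖x‖ ^ 2 + 2 * (inner ℝ x u : ℝ) + ‖u‖ ^ 2 := norm_add_sq_real x u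
    have e2 : ‖y + u‖ ^ 2 = ‖y‖ ^ 2 + 2 * (inner ℝ y u : ℝ) + ‖u‖ ^ 2 := norm_add_sq_real y u
    rw [e1, e2, hx, hy, inner_sub_left]; ring
  have hinner : |(inner ℝ (x - y) u : ℝ)| ≤ ‖x - y‖ * t := by
    rw [← hu]; exact abs_real_inner_le_norm _ _
  have habs : |‖x + u‖ - ‖y + u‖| * (‖x + u‖ + ‖y + u‖) = |‖x + u‖ ^ 2 - ‖y + u‖ ^ 2| := by
    rw [← abs_of_nonneg (by linarith : (0:ℝ) ≤ ‖x + u‖ + ‖y + u‖), ← abs_mul]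
    ring_nf
  have hdiff : |‖x + u‖ - ‖y + u‖| * (1 - t) ≤ ‖x - y‖ * t := by
    have h1 : |‖x + u‖ ^ 2 - ‖y + u‖ ^ 2| ≤ 2 * (‖x - y‖ * t) := by
      rw [hsq, abs_mul, abs_of_nonneg (by norm_num : (0:ℝ) ≤ 2)]
      linarith [hinner]
    nlinarith [abs_nonneg (‖x + u‖ - ‖y + u‖), habs]
  have hv : x + u = ‖x + u‖ • (‖x + u‖⁻¹ • (x + u)) := by
    rw [smul_smul, mul_inv_cancel₀ hnvpos.ne', one_smul]
  have hw : y + u = ‖y + u‖ • (‖y + u‖⁻¹ • (y + u)) := by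
    rw [smul_smul, mul_inv_cancel₀ hnwpos.ne', one_smul]
  obtain ⟨Tx, hTx⟩ : ∃ Tx, Tx = ‖x + u‖⁻¹ • (x + u) := ⟨_, rfl⟩
  obtain ⟨Ty, hTy⟩ : ∃ Ty, Ty = ‖y + u‖⁻¹ • (y + u) := ⟨_, rfl⟩
  rw [← hTx, ← hTy]
  have hTynorm : ‖Ty‖ = 1 := by rw [hTy]; exact aux_T_norm u hu ht4 y hy
  have hdec : x - y = ‖x + u‖ • (Tx - Ty) + (‖x + u‖ - ‖y + u‖) • Ty := by
    have h1 : ‖x + u‖ • (Tx - Ty) + (‖x + u‖ - ‖y + u‖) • Ty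
        = ‖x + u‖ • Tx - ‖y + u‖ • Ty := by
      rw [smul_sub, sub_smul]; abel
    rw [h1, hTx, hTy, ← hv, ← hw]; abel
  have hnorm : ‖x - y‖ ≤ ‖x + u‖ * ‖Tx - Ty‖ + |‖x + u‖ - ‖y + u‖| := by
    calc ‖x - y‖ = ‖‖x + u‖ • (Tx - Ty) + (‖x + u‖ - ‖y + u‖) • Ty‖ := by rw [← hdec]
      _ ≤ ‖‖x + u‖ • (Tx - Ty)‖ + ‖(‖x + u‖ - ‖y + u‖) • Ty‖ := norm_add_le _ _
      _ = |‖x + u‖| * ‖Tx - Ty‖ + |‖x + u‖ - ‖y + u‖| * ‖Ty‖ := by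
          rw [norm_smul, norm_smul, Real.norm_eq_abs, Real.norm_eq_abs]
      _ = ‖x + u‖ * ‖Tx - Ty‖ + |‖x + u‖ - ‖y + u‖| := by
          rw [abs_of_pos hnvpos, hTynorm, mul_one]
  rw [dist_eq_norm, dist_eq_norm, div_mul_eq_mul_div, le_div_iff₀ hden]
  have h5 : (1 - t) * ‖x - y‖ ≤
      (1 - t) * (‖x + u‖ * ‖Tx - Ty‖ + |‖x + u‖ - ‖y + u‖|) :=
    mul_le_mul_of_nonneg_left hnorm (by linarith)
  have hq : (1 - t) * (‖x + u‖ * ‖Tx - Ty‖) ≤ (1 - t) * ((1 + t) * ‖Tx - Ty‖) :=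
    mul_le_mul_of_nonneg_left
      (mul_le_mul_of_nonneg_right hnvub (norm_nonneg _)) (by linarith)
  nlinarith [h5, hq, hdiff]

end aux

set_option maxHeartbeats 2000000 in
lemma sigma_bound_main (d : ℕ) (hd4 : 4 ≤ d) (a : ℝ) (ha : 0 ≤ a)
    (hsmall : a * (d : ℝ) ^ ((3 : ℝ) / 2) ≤ 1 / 8) :
    μH[(d : ℝ) - 1] (SigmaSet d a) ≤
      ENNReal.ofReal (Real.exp 3) *
        μH[(d : ℝ) - 1] (Metric.sphere (0 : EuclideanSpace ℝ (Fin d)) 1) / 2 ^ d := by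
  have hd1 : (1 : ℝ) ≤ d := by exact_mod_cast le_trans (by norm_num) hd4
  have hdpos : (0 : ℝ) < d := by linarith
  obtain ⟨sd, hsd⟩ : ∃ sd, sd = Real.sqrt d := ⟨_, rfl⟩
  have hsdsq : sd ^ 2 = d := by rw [hsd]; exact Real.sq_sqrt hdpos.le
  have hsdpos : 0 < sd := by rw [hsd]; exact Real.sqrt_pos.2 hdpos
  have hsd2 : 2 ≤ sd := by
    have h4 : (4:ℝ) ≤ (d:ℝ) := by exact_mod_cast hd4
    have h5 : Real.sqrt 4 ≤ Real.sqrt d := Real.sqrt_le_sqrt h4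
    have h6 : Real.sqrt 4 = 2 := by
      rw [show (4:ℝ) = 2^2 by norm_num, Real.sqrt_sq (by norm_num)]
    rw [hsd]; linarith
  have hr32 : (d : ℝ) ^ ((3 : ℝ) / 2) = d * sd := by
    rw [hsd, Real.sqrt_eq_rpow, show (3:ℝ)/2 = 1 + 1/2 by norm_num,
      Real.rpow_add hdpos, Real.rpow_one]
  obtain ⟨c, hc⟩ : ∃ c, c = a + ((d : ℝ) ^ 2)⁻¹ := ⟨_, rfl⟩
  have hca : a < c := by
    have h : (0:ℝ) < ((d:ℝ)^2)⁻¹ := by positivity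
    rw [hc]; linarith
  have hc0 : 0 < c := lt_of_le_of_lt ha hca
  obtain ⟨t, htdef⟩ : ∃ t, t = c * sd := ⟨_, rfl⟩
  have ht0 : 0 < t := by rw [htdef]; exact mul_pos hc0 hsdpos
  have hasd : a * (d * sd) ≤ 1 / 8 := by rw [← hr32]; exact hsmall
  have hinvsd : ((d : ℝ) ^ 2)⁻¹ * sd * d = 1 / sd := by
    rw [← hsdsq]; field_simp
  have htd : t * (d : ℝ) ≤ 5 / 8 := by
    have h1 : 1 / sd ≤ 1 / 2 := by
      apply div_le_div_of_nonneg_left (by norm_num) (by norm_num) hsd2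
    have h2 : t * d = a * (d * sd) + ((d : ℝ) ^ 2)⁻¹ * sd * d := by
      rw [htdef, hc]; ring
    rw [h2, hinvsd]; linarith
  have ht4 : t ≤ 1 / 4 := by
    have h1 : a * sd ≤ 1 / 8 := by
      nlinarith [mul_nonneg (mul_nonneg ha hsdpos.le) (by linarith : (0:ℝ) ≤ (d:ℝ) - 1)]
    have h2 : ((d : ℝ) ^ 2)⁻¹ * sd ≤ 1 / 8 := by
      rw [← hsdsq]
      rw [inv_mul_le_iff₀ (by positivity)]
      have h3 : (2:ℝ)^3 ≤ sd^3 := pow_le_pow_left₀ (by norm_num) hsd2 3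
      nlinarith [mul_le_mul_of_nonneg_right h3 (by linarith : (0:ℝ) ≤ sd)]
    have h4 : t = a * sd + ((d : ℝ) ^ 2)⁻¹ * sd := by rw [htdef, hc]; ring
    rw [h4]; linarith
  -- the constant shift vector
  obtain ⟨u, hudef⟩ : ∃ u : EuclideanSpace ℝ (Fin d), u = WithLp.toLp 2 (fun _ => c) := ⟨_, rfl⟩
  have hui : ∀ i, u i = c := by intro i; rw [hudef]
  have hu : ‖u‖ = t := by
    rw [EuclideanSpace.norm_eq]
    have h1 : ∀ i : Fin d, ‖u i‖ ^ 2 = c ^ 2 := by intro i; rw [hui i]; simp [sq_abs]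
    rw [Finset.sum_congr rfl (fun i _ => h1 i), Finset.sum_const, Finset.card_univ,
      Fintype.card_fin, nsmul_eq_mul]
    rw [Real.sqrt_mul hdpos.le, Real.sqrt_sq hc0.le, ← hsd, htdef, mul_comm]
  obtain ⟨T, hTapp⟩ :
      ∃ T : EuclideanSpace ℝ (Fin d) → EuclideanSpace ℝ (Fin d),
        ∀ x, T x = ‖x + u‖⁻¹ • (x + u) := ⟨_, fun _ => rfl⟩
  have hTnorm : ∀ x : EuclideanSpace ℝ (Fin d), ‖x‖ = 1 → ‖T x‖ = 1 := by
    intro x hx; rw [hTapp]; exact aux_T_norm u hu ht4 x hx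
  obtain ⟨Kre, hKre⟩ : ∃ K : ℝ, K = (1 - t) * (1 + t) / (1 - 2 * t) := ⟨_, rfl⟩
  have hden : 0 < 1 - 2 * t := by linarith
  have hKre1 : 0 < Kre := by rw [hKre]; apply div_pos (by nlinarith) hden
  have hkey : ∀ x : EuclideanSpace ℝ (Fin d), ‖x‖ = 1 →
      ∀ y : EuclideanSpace ℝ (Fin d), ‖y‖ = 1 →
      dist x y ≤ Kre * dist (T x) (T y) := by
    intro x hx y hy
    rw [hKre, hTapp, hTapp]
    exact aux_key u hu ht0 ht4 x hx y hy
  obtain ⟨SS, hSSdef⟩ : ∃ S, S = SigmaSet d a := ⟨_, rfl⟩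
  have hSSmem : ∀ x ∈ SS, x ∈ Metric.sphere (0 : EuclideanSpace ℝ (Fin d)) 1 ∧
      ∀ i : Fin d, -a ≤ x i := by
    intro x hx; rw [hSSdef] at hx; exact hx
  have hSSnorm : ∀ x ∈ SS, ‖x‖ = 1 := by
    intro x hx
    exact mem_sphere_zero_iff_norm.1 (hSSmem x hx).1
  have hinj : InjOn T SS := by
    intro x hx y hy hT
    have h := hkey x (hSSnorm x hx) y (hSSnorm y hy)
    rw [hT, dist_self, mul_zero] at h
    exact dist_le_zero.1 (le_antisymm h dist_nonneg ▸ h)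
  obtain ⟨B, hB⟩ : ∃ B, B = T '' SS := ⟨_, rfl⟩
  obtain ⟨K, hK⟩ : ∃ K : ℝ≥0, K = Real.toNNReal Kre := ⟨_, rfl⟩
  have hKcoe : (K : ℝ) = Kre := by rw [hK]; exact Real.coe_toNNReal _ hKre1.le
  have hgB : LipschitzOnWith K (invFunOn T SS) B := by
    rw [lipschitzOnWith_iff_dist_le_mul, hB]
    rintro y1 ⟨x1, hx1, rfl⟩ y2 ⟨x2, hx2, rfl⟩
    rw [hinj.leftInvOn_invFunOn hx1, hinj.leftInvOn_invFunOn hx2, hKcoe]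
    exact hkey x1 (hSSnorm x1 hx1) x2 (hSSnorm x2 hx2)
  have hgImg : invFunOn T SS '' B = SS := by
    rw [hB]; exact hinj.invFunOn_image Subset.rfl
  have hs0 : (0 : ℝ) ≤ (d : ℝ) - 1 := by linarith
  have step1 : μH[(d : ℝ) - 1] SS ≤ (K : ℝ≥0∞) ^ ((d : ℝ) - 1) * μH[(d : ℝ) - 1] B := by
    rw [← hgImg]
    exact hgB.hausdorffMeasure_image_le hs0
  -- compactness and measurability
  have hSSc : IsCompact SS := by
    have hSSeq : SS = Metric.sphere (0 : EuclideanSpace ℝ (Fin d)) 1 ∩ ⋂ i, {x | -a ≤ x i} := by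
      rw [hSSdef]; ext x; simp [SigmaSet, Set.mem_iInter]
    rw [hSSeq]
    exact (isCompact_sphere _ _).inter_right
      (isClosed_iInter fun i => isClosed_le continuous_const (by fun_prop))
  have hTcont : ContinuousOn T SS := by
    have hTeq : T = fun x => ‖x + u‖⁻¹ • (x + u) := funext hTapp
    rw [hTeq]
    apply ContinuousOn.smul (f := fun x => ‖x + u‖⁻¹) (g := fun x => x + u)
    · apply ContinuousOn.inv₀
      · exact (continuous_norm.comp (continuous_id.add continuous_const)).continuousOn
      · intro x hx; exact (aux_norm_pos u hu ht4 x (hSSnorm x hx)).ne'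
    · exact (continuous_id.add continuous_const).continuousOn
  have hBc : IsCompact B := hB ▸ hSSc.image_of_continuousOn hTcont
  have hBpos : ∀ y ∈ B, ∀ i, 0 < y i := by
    rw [hB]
    rintro _ ⟨x, hx, rfl⟩ i
    have happ : T x i = ‖x + u‖⁻¹ * (x i + c) := by
      rw [hTapp]
      have : (x + u) i = x i + c := by
        simp [hui i]
      simp [this, hui i, mul_add]
    rw [happ]
    have h1 : -a ≤ x i := (hSSmem x hx).2 i
    have h2 : 0 < x i + c := by linarith
    have h3 : 0 < ‖x + u‖ := aux_norm_pos u hu ht4 x (hSSnorm x hx)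
    positivity
  have hBsph : ∀ y ∈ B, ‖y‖ = 1 := by
    rw [hB]
    rintro _ ⟨x, hx, rfl⟩
    exact hTnorm x (hSSnorm x hx)
  -- the 2^d sign-flipped copies
  obtain ⟨flip, hflip⟩ :
      ∃ flip : (Fin d → Bool) → EuclideanSpace ℝ (Fin d) → EuclideanSpace ℝ (Fin d),
        ∀ ε x i, flip ε x i = if ε i then x i else -x i :=
    ⟨fun ε x => WithLp.toLp 2 (fun i => if ε i then x i else -x i), fun _ _ _ => rfl⟩
  have hflip_iso : ∀ ε, Isometry (flip ε) := by
    intro ε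
    apply Isometry.of_dist_eq
    intro x y
    rw [EuclideanSpace.dist_eq, EuclideanSpace.dist_eq]
    congr 1
    apply Finset.sum_congr rfl
    intro i _
    rw [hflip, hflip]
    by_cases h : ε i <;> simp [h, Real.dist_eq, abs_sub_comm, neg_sub_neg]
  have hflip0 : ∀ ε, flip ε 0 = 0 := by
    intro ε; ext i; rw [hflip]; simp
  have hflip_sph : ∀ ε, flip ε '' B ⊆ Metric.sphere (0 : EuclideanSpace ℝ (Fin d)) 1 := by
    rintro ε _ ⟨b, hb, rfl⟩
    rw [mem_sphere_zero_iff_norm]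
    have h := (hflip_iso ε).dist_eq b 0
    rw [hflip0 ε] at h
    rw [dist_zero_right, dist_zero_right] at h
    rw [h, hBsph b hb]
  have hflipc : ∀ ε, MeasurableSet (flip ε '' B) := by
    intro ε
    exact (hBc.image (hflip_iso ε).continuous).measurableSet
  have hdisj : Pairwise (Disjoint on fun ε => flip ε '' B) := by
    intro ε ε' hne
    rw [Function.onFun, Set.disjoint_left]
    rintro _ ⟨b, hb, rfl⟩ ⟨b', hb', heq⟩
    obtain ⟨i, hi⟩ : ∃ i, ε i ≠ ε' i := by
      by_contra h; push_neg at h; exact hne (funext h)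
    have hcoord := congrArg (fun v : EuclideanSpace ℝ (Fin d) => v i) heq
    simp only [hflip] at hcoord
    have hbpos := hBpos b hb i
    have hbpos' := hBpos b' hb' i
    cases hεi : ε i <;> cases hεi' : ε' i <;> rw [hεi, hεi'] at hcoord hi <;>
      simp at hcoord hi <;> linarith
  have hunion : μH[(d : ℝ) - 1] (⋃ ε, flip ε '' B) = ∑' ε, μH[(d : ℝ) - 1] (flip ε '' B) :=
    measure_iUnion hdisj (fun ε => hflipc ε)
  have heach : ∀ ε, μH[(d : ℝ) - 1] (flip ε '' B) = μH[(d : ℝ) - 1] B := by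
    intro ε
    exact (hflip_iso ε).hausdorffMeasure_image (Or.inl hs0) B
  have hcard : Fintype.card (Fin d → Bool) = 2 ^ d := by
    simp [Fintype.card_fun]
  have hsum : ∑' ε, μH[(d : ℝ) - 1] (flip ε '' B) = (2 : ℝ≥0∞) ^ d * μH[(d : ℝ) - 1] B := by
    rw [tsum_fintype]
    rw [Finset.sum_congr rfl (fun ε _ => heach ε), Finset.sum_const, Finset.card_univ, hcard,
      nsmul_eq_mul]
    push_cast
    ring
  have hle : (2 : ℝ≥0∞) ^ d * μH[(d : ℝ) - 1] B ≤
      μH[(d : ℝ) - 1] (Metric.sphere (0 : EuclideanSpace ℝ (Fin d)) 1) := by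
    rw [← hsum, ← hunion]
    exact measure_mono (Set.iUnion_subset fun ε => hflip_sph ε)
  have step2 : μH[(d : ℝ) - 1] B ≤
      μH[(d : ℝ) - 1] (Metric.sphere (0 : EuclideanSpace ℝ (Fin d)) 1) / 2 ^ d := by
    rw [ENNReal.le_div_iff_mul_le (Or.inl (pow_ne_zero _ two_ne_zero))
      (Or.inl (ENNReal.pow_ne_top ENNReal.ofNat_ne_top))]
    rw [mul_comm]
    exact hle
  have hKexp : Kre ≤ Real.exp (4 * t) := by
    have h1 : Kre ≤ 1 + 4 * t := by
      rw [hKre, div_le_iff₀ hden]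
      nlinarith
    have h2 : 1 + 4 * t ≤ Real.exp (4 * t) := by
      linarith [Real.add_one_le_exp (4 * t)]
    linarith
  have hKs : (K : ℝ≥0∞) ^ ((d : ℝ) - 1) ≤ ENNReal.ofReal (Real.exp 3) := by
    have hcoe : (K : ℝ≥0∞) = ENNReal.ofReal Kre := by rw [hK]; rfl
    rw [hcoe, ENNReal.ofReal_rpow_of_pos hKre1]
    apply ENNReal.ofReal_le_ofReal
    calc Kre ^ ((d : ℝ) - 1) ≤ (Real.exp (4 * t)) ^ ((d : ℝ) - 1) :=
          Real.rpow_le_rpow hKre1.le hKexp hs0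
      _ = Real.exp (4 * t * ((d : ℝ) - 1)) := by
          rw [Real.rpow_def_of_pos (Real.exp_pos _), Real.log_exp]
      _ ≤ Real.exp 3 := by
          apply Real.exp_le_exp.2
          nlinarith [htd, ht0.le]
  rw [← hSSdef]
  calc μH[(d : ℝ) - 1] SS ≤ (K : ℝ≥0∞) ^ ((d : ℝ) - 1) * μH[(d : ℝ) - 1] B := step1
    _ ≤ ENNReal.ofReal (Real.exp 3) *
        (μH[(d : ℝ) - 1] (Metric.sphere (0 : EuclideanSpace ℝ (Fin d)) 1) / 2 ^ d) :=
        mul_le_mul' hKs step2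
    _ = ENNReal.ofReal (Real.exp 3) *
        μH[(d : ℝ) - 1] (Metric.sphere (0 : EuclideanSpace ℝ (Fin d)) 1) / 2 ^ d :=
        (mul_div_assoc _ _ _).symm

set_option maxHeartbeats 1000000 in
/-- if `a_d ≥ 0` and `a_d · d^{3/2} → 0`, then there is `C > 0` with
`|Σ_d(a_d)|_{d-1} ≤ C · ω_{d-1} / 2^d` for all `d ≥ 1`. -/
theorem sigma_volume_upper_bound (a : ℕ → ℝ) (ha : ∀ d, 0 ≤ a d)
    (hlim : Tendsto (fun d : ℕ => a d * (d : ℝ) ^ ((3 : ℝ) / 2)) atTop (nhds 0)) :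
    ∃ C : ℝ, 0 < C ∧ ∀ d : ℕ, 1 ≤ d →
      μH[(d : ℝ) - 1] (SigmaSet d (a d)) ≤
        ENNReal.ofReal C *
          μH[(d : ℝ) - 1] (Metric.sphere (0 : EuclideanSpace ℝ (Fin d)) 1) / 2 ^ d := by
  have h8 : ∀ᶠ d in atTop, a d * (d : ℝ) ^ ((3 : ℝ) / 2) < 1 / 8 :=
    hlim.eventually_lt_const (by norm_num)
  obtain ⟨N₀, hN₀⟩ := eventually_atTop.1 h8
  set N := max N₀ 4 with hN
  refine ⟨Real.exp 3 + 2 ^ N, by positivity, ?_⟩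
  intro d hd1
  by_cases hdN : N ≤ d
  · have hmain := sigma_bound_main d (le_trans (le_max_right _ _) hdN) (a d) (ha d)
      (le_of_lt (hN₀ d (le_trans (le_max_left _ _) hdN)))
    refine hmain.trans ?_
    apply ENNReal.div_le_div_right
    apply mul_le_mul_left
    apply ENNReal.ofReal_le_ofReal
    have : (0:ℝ) < 2 ^ N := by positivity
    linarith
  · push_neg at hdN
    have hsub : SigmaSet d (a d) ⊆ Metric.sphere (0 : EuclideanSpace ℝ (Fin d)) 1 :=
      fun x hx => hx.1
    refine (measure_mono hsub).trans ?_
    rw [ENNReal.le_div_iff_mul_le (Or.inl (pow_ne_zero _ two_ne_zero))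
      (Or.inl (ENNReal.pow_ne_top ENNReal.ofNat_ne_top))]
    rw [mul_comm]
    apply mul_le_mul_left
    calc (2 : ℝ≥0∞) ^ d ≤ 2 ^ N := pow_le_pow_right₀ one_le_two hdN.le
      _ = ENNReal.ofReal (2 ^ N) := by
          rw [ENNReal.ofReal_pow (by norm_num), ENNReal.ofReal_ofNat]
      _ ≤ ENNReal.ofReal (Real.exp 3 + 2 ^ N) := by
          apply ENNReal.ofReal_le_ofReal
          linarith [Real.exp_pos 3]
end

section
/- Let (a_d)_{d≥1} be any sequence of nonnegative reals with a_d·d^{3/2} → 0 as d → ∞. Then there exists a constant C > 0 such that for all d ≥ 1, the set {x ∈ S^{d-1} : x_i ≤ -a_d for at least one index i} has (d-1)-dimensional Hausdorff measure at least (1 - C/2^d)·ω_{d-1}. -/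
open MeasureTheory Filter Set
open scoped ENNReal NNReal





/-- decomposition of difference of normalizations -/
lemma normalize_sub_decomp {F : Type*} [NormedAddCommGroup F] [NormedSpace ℝ F] (X Y : F) :
    ‖X‖⁻¹ • X - ‖Y‖⁻¹ • Y = ‖X‖⁻¹ • (X - Y) + (‖X‖⁻¹ - ‖Y‖⁻¹) • Y := by
  rw [smul_sub, sub_smul]; abel

/-- the radial retraction is 2-Lipschitz outside the unit ball -/
lemma radial_lip {F : Type*} [NormedAddCommGroup F] [NormedSpace ℝ F] {x y : F} (hx : 1 ≤ ‖x‖) (hy : 1 ≤ ‖y‖) :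
    ‖‖x‖⁻¹ • x - ‖y‖⁻¹ • y‖ ≤ 2 * ‖x - y‖ := by
  have hx0 : (0:ℝ) < ‖x‖ := lt_of_lt_of_le one_pos hx
  have hy0 : (0:ℝ) < ‖y‖ := lt_of_lt_of_le one_pos hy
  rw [normalize_sub_decomp]
  have h1 : ‖‖x‖⁻¹ • (x - y)‖ = ‖x‖⁻¹ * ‖x - y‖ := by
    rw [norm_smul, Real.norm_eq_abs, abs_of_pos (by positivity)]
  have h2 : ‖(‖x‖⁻¹ - ‖y‖⁻¹) • y‖ = |‖x‖⁻¹ - ‖y‖⁻¹| * ‖y‖ := by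
    rw [norm_smul, Real.norm_eq_abs]
  have h3 : |‖x‖⁻¹ - ‖y‖⁻¹| = |‖y‖ - ‖x‖| / (‖x‖ * ‖y‖) := by
    rw [show ‖x‖⁻¹ - ‖y‖⁻¹ = (‖y‖ - ‖x‖) / (‖x‖ * ‖y‖) by field_simp, abs_div,
      abs_of_pos (by positivity : (0:ℝ) < ‖x‖ * ‖y‖)]
  have h4 : |‖y‖ - ‖x‖| ≤ ‖x - y‖ := by
    rw [abs_sub_comm]; exact abs_norm_sub_norm_le x y
  calc ‖‖x‖⁻¹ • (x - y) + (‖x‖⁻¹ - ‖y‖⁻¹) • y‖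
      ≤ ‖‖x‖⁻¹ • (x - y)‖ + ‖(‖x‖⁻¹ - ‖y‖⁻¹) • y‖ := norm_add_le _ _
    _ ≤ ‖x - y‖ + ‖x - y‖ := by
        rw [h1, h2, h3]
        have e1 : ‖x‖⁻¹ * ‖x - y‖ ≤ ‖x - y‖ := by
          rw [inv_mul_le_iff₀ hx0]; nlinarith [norm_nonneg (x - y)]
        have e2 : |‖y‖ - ‖x‖| / (‖x‖ * ‖y‖) * ‖y‖ ≤ ‖x - y‖ := by
          rw [div_mul_eq_mul_div, div_le_iff₀ (by positivity)]
          nlinarith [mul_le_mul_of_nonneg_right h4 hy0.le,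
            mul_le_mul_of_nonneg_right hx (mul_nonneg (norm_nonneg (x - y)) hy0.le)]
        linarith
    _ = 2 * ‖x - y‖ := by ring




set_option maxHeartbeats 1000000 in
lemma expand_lemma {F : Type*} [NormedAddCommGroup F] [InnerProductSpace ℝ F]
    {x y v : F} (hx : ‖x‖ = 1) (hy : ‖y‖ = 1) (hv : ‖v‖ ≤ 1/4) :
    (1 - 2 * ‖v‖) * ‖x - y‖ ≤ ‖‖x + v‖⁻¹ • (x + v) - ‖y + v‖⁻¹ • (y + v)‖ := by
  set t := ‖v‖ with htdef
  have ht0 : 0 ≤ t := norm_nonneg v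
  set X := x + v with hX
  set Y := y + v with hY
  have hXl : 1 - t ≤ ‖X‖ := by
    have : ‖x‖ ≤ ‖X‖ + ‖v‖ := by
      calc ‖x‖ = ‖X - v‖ := by rw [hX]; congr 1; abel
        _ ≤ ‖X‖ + ‖v‖ := norm_sub_le _ _
    linarith [this, hx.symm ▸ this]
  have hXu : ‖X‖ ≤ 1 + t := by
    calc ‖X‖ ≤ ‖x‖ + ‖v‖ := norm_add_le _ _
      _ = 1 + t := by rw [hx]
  have hYl : 1 - t ≤ ‖Y‖ := by
    have : ‖y‖ ≤ ‖Y‖ + ‖v‖ := by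
      calc ‖y‖ = ‖Y - v‖ := by rw [hY]; congr 1; abel
        _ ≤ ‖Y‖ + ‖v‖ := norm_sub_le _ _
    linarith
  have hYu : ‖Y‖ ≤ 1 + t := by
    calc ‖Y‖ ≤ ‖y‖ + ‖v‖ := norm_add_le _ _
      _ = 1 + t := by rw [hy]
  have hX0 : (0:ℝ) < ‖X‖ := by linarith
  have hY0 : (0:ℝ) < ‖Y‖ := by linarith
  -- difference of squared norms
  have hsq : ‖X‖^2 - ‖Y‖^2 = 2 * inner ℝ (x - y) v := by
    rw [hX, hY, norm_add_sq_real, norm_add_sq_real, hx, hy, inner_sub_left]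
    ring
  have hinner : |(inner ℝ (x - y) v : ℝ)| ≤ ‖x - y‖ * t := abs_real_inner_le_norm (x - y) v
  set δ := |‖X‖ - ‖Y‖| with hδdef
  have hδ : δ * (‖X‖ + ‖Y‖) ≤ 2 * (‖x - y‖ * t) := by
    have : δ * (‖X‖ + ‖Y‖) = |‖X‖^2 - ‖Y‖^2| := by
      rw [hδdef, ← abs_of_nonneg (by linarith : (0:ℝ) ≤ ‖X‖ + ‖Y‖), ← abs_mul]
      ring_nf
    rw [this, hsq, abs_mul]
    simp only [abs_two]
    nlinarith [hinner]
  have hδ0 : 0 ≤ δ := abs_nonneg _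
  have hδle : δ * (1 - t) ≤ ‖x - y‖ * t := by nlinarith
  -- decomposition
  have hdecomp : ‖X‖⁻¹ • X - ‖Y‖⁻¹ • Y = ‖X‖⁻¹ • (X - Y) + (‖X‖⁻¹ - ‖Y‖⁻¹) • Y := by
    rw [smul_sub, sub_smul]; abel
  have hXY : X - Y = x - y := by rw [hX, hY]; abel
  have h1 : ‖‖X‖⁻¹ • (X - Y)‖ = ‖X‖⁻¹ * ‖x - y‖ := by
    rw [hXY, norm_smul, Real.norm_eq_abs, abs_of_pos (by positivity)]
  have h2 : ‖(‖X‖⁻¹ - ‖Y‖⁻¹) • Y‖ = δ / ‖X‖ := by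
    rw [norm_smul, Real.norm_eq_abs,
      show ‖X‖⁻¹ - ‖Y‖⁻¹ = (‖Y‖ - ‖X‖) / (‖X‖ * ‖Y‖) by field_simp, abs_div,
      abs_of_pos (by positivity : (0:ℝ) < ‖X‖ * ‖Y‖), abs_sub_comm]
    field_simp [hδdef]
    ring
  have hlow : ‖X‖⁻¹ * ‖x - y‖ - δ / ‖X‖ ≤ ‖‖X‖⁻¹ • X - ‖Y‖⁻¹ • Y‖ := by
    rw [hdecomp]
    calc ‖X‖⁻¹ * ‖x - y‖ - δ / ‖X‖
        = ‖‖X‖⁻¹ • (X - Y)‖ - ‖(‖X‖⁻¹ - ‖Y‖⁻¹) • Y‖ := by rw [h1, h2]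
      _ ≤ ‖‖X‖⁻¹ • (X - Y) + (‖X‖⁻¹ - ‖Y‖⁻¹) • Y‖ := by
          have := norm_add_le (‖X‖⁻¹ • (X - Y) + (‖X‖⁻¹ - ‖Y‖⁻¹) • Y) (-((‖X‖⁻¹ - ‖Y‖⁻¹) • Y))
          simp only [add_neg_cancel_right, norm_neg] at this
          linarith
  have hD0 : (0:ℝ) ≤ ‖x - y‖ := norm_nonneg _
  have hδD : δ ≤ (t + 2*t^2) * ‖x - y‖ := by
    nlinarith [hδle, hδ0, hD0, ht0, hv, mul_nonneg (mul_nonneg hD0 ht0) ht0, sq_nonneg t,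
      mul_nonneg hD0 (mul_nonneg ht0 ht0), mul_nonneg (mul_nonneg hD0 (mul_nonneg ht0 ht0)) ht0]
  have key : (1 - 2*t) * ‖x - y‖ * ‖X‖ ≤ ‖x - y‖ - δ := by
    have h12t : (0:ℝ) ≤ 1 - 2*t := by linarith
    have h5 : (1 - 2*t) * ‖X‖ ≤ (1 - 2*t) * (1 + t) := mul_le_mul_of_nonneg_left hXu h12t
    have h6 : ‖x - y‖ * ((1 - 2*t) * ‖X‖) ≤ ‖x - y‖ * ((1 - 2*t) * (1 + t)) :=
      mul_le_mul_of_nonneg_left h5 hD0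
    nlinarith [h6, hδD, hD0, ht0]
  calc (1 - 2*t) * ‖x - y‖ = ((1 - 2*t) * ‖x - y‖ * ‖X‖) * ‖X‖⁻¹ := by field_simp
    _ ≤ (‖x - y‖ - δ) * ‖X‖⁻¹ := by
        exact mul_le_mul_of_nonneg_right key (inv_nonneg.mpr hX0.le)
    _ = ‖X‖⁻¹ * ‖x - y‖ - δ / ‖X‖ := by field_simp
    _ ≤ _ := hlow



noncomputable def sgn (b : Bool) : ℝ := if b then 1 else -1

lemma sgn_mul_self (b : Bool) : sgn b * sgn b = 1 := by cases b <;> simp [sgn]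


/-- the (n)-dimensional Hausdorff measure of the unit sphere in `ℝ^{n+1}` is finite -/
lemma sphere_hausdorff_lt_top (n : ℕ) :
    μH[(n:ℝ)] (Metric.sphere (0 : EuclideanSpace ℝ (Fin (n+1))) 1) < ⊤ := by
  classical
  set E := EuclideanSpace ℝ (Fin (n+1))
  set P := Fin n → ℝ
  -- the radial retraction
  set r : E → E := fun z => ‖z‖⁻¹ • z with hr
  -- insertion maps
  set g : Fin (n+1) → Bool → P → E := fun j s u =>
    (WithLp.equiv 2 (Fin (n+1) → ℝ)).symm (j.insertNth (sgn s) u) with hg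
  have hgapply_same : ∀ j s u, g j s u j = sgn s := by
    intro j s u
    simp [hg, PiLp.toLp_apply]
  have hgapply_above : ∀ j s u i, g j s u (j.succAbove i) = u i := by
    intro j s u i
    simp [hg, PiLp.toLp_apply]
  -- Lipschitz constant for g
  have hglip : ∀ j s, LipschitzOnWith (Real.sqrt n).toNNReal (g j s)
      (Metric.closedBall (0:P) 1) := by
    intro j s
    apply LipschitzOnWith.of_dist_le_mul
    intro u _ u' _
    rw [Real.coe_toNNReal _ (Real.sqrt_nonneg _), EuclideanSpace.dist_eq]
    rw [Fin.sum_univ_succAbove (fun i => dist (g j s u i) (g j s u' i) ^ 2) j]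
    simp only [hgapply_same, hgapply_above, dist_self]
    have hb : ∀ i : Fin n, dist (u i) (u' i) ^ 2 ≤ dist u u' ^ 2 := fun i =>
      pow_le_pow_left₀ dist_nonneg (dist_le_pi_dist u u' i) 2
    calc Real.sqrt ((0:ℝ) ^ 2 + ∑ i : Fin n, dist (u i) (u' i) ^ 2)
        ≤ Real.sqrt ((n : ℝ) * dist u u' ^ 2) := by
          apply Real.sqrt_le_sqrt
          have : ∑ i : Fin n, dist (u i) (u' i) ^ 2 ≤ (n:ℝ) * dist u u' ^ 2 := by
            calc ∑ i : Fin n, dist (u i) (u' i) ^ 2 ≤ ∑ _i : Fin n, dist u u' ^ 2 :=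
                Finset.sum_le_sum fun i _ => hb i
              _ = (n:ℝ) * dist u u' ^ 2 := by simp [Finset.sum_const, nsmul_eq_mul]
          nlinarith [this]
      _ = Real.sqrt n * dist u u' := by
          rw [Real.sqrt_mul (Nat.cast_nonneg n), Real.sqrt_sq dist_nonneg]
  -- g maps the ball into the region outside the unit ball
  have hgmaps : ∀ j s, MapsTo (g j s) (Metric.closedBall (0:P) 1) {z : E | 1 ≤ ‖z‖} := by
    intro j s u _
    have h1 : (1:ℝ) ≤ ∑ i, ‖g j s u i‖ ^ 2 := by
      have : ∀ i, (0:ℝ) ≤ ‖g j s u i‖ ^ 2 := fun i => sq_nonneg _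
      have hj : ‖g j s u j‖ ^ 2 = 1 := by
        rw [hgapply_same]; cases s <;> simp [sgn]
      calc (1:ℝ) = ‖g j s u j‖ ^ 2 := hj.symm
        _ ≤ ∑ i, ‖g j s u i‖ ^ 2 :=
          Finset.single_le_sum (f := fun i => ‖g j s u i‖ ^ 2)
            (fun i _ => sq_nonneg _) (Finset.mem_univ j)
    show (1:ℝ) ≤ ‖g j s u‖
    rw [EuclideanSpace.norm_eq]
    calc (1:ℝ) = Real.sqrt 1 := by simp
      _ ≤ _ := Real.sqrt_le_sqrt h1
  -- r is 2-Lipschitz there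
  have hrlip : LipschitzOnWith 2 r {z : E | 1 ≤ ‖z‖} := by
    apply LipschitzOnWith.of_dist_le_mul
    intro z hz w hw
    rw [dist_eq_norm, dist_eq_norm]
    simpa using radial_lip hz hw
  -- the composition is Lipschitz on the ball
  have hcomp : ∀ j s, LipschitzOnWith (2 * (Real.sqrt n).toNNReal) (r ∘ g j s)
      (Metric.closedBall (0:P) 1) := fun j s => (hrlip.comp (hglip j s) (hgmaps j s))
  -- covering of the sphere
  have hcover : Metric.sphere (0 : E) 1 ⊆
      ⋃ p : Fin (n+1) × Bool, (r ∘ g p.1 p.2) '' Metric.closedBall (0:P) 1 := by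
    intro x hx
    have hxnorm : ‖x‖ = 1 := mem_sphere_zero_iff_norm.mp hx
    obtain ⟨j, -, hjmax⟩ := Finset.exists_max_image Finset.univ (fun i => |x i|)
      ⟨0, Finset.mem_univ 0⟩
    have hj' : ∀ i, |x i| ≤ |x j| := fun i => hjmax i (Finset.mem_univ i)
    set m := |x j| with hm
    have hm0 : 0 < m := by
      by_contra h
      push_neg at h
      have hz : ∀ i, x i = 0 :=
        fun i => abs_eq_zero.mp (le_antisymm ((hj' i).trans h) (abs_nonneg _))
      have : ‖x‖ = 0 := by
        rw [EuclideanSpace.norm_eq]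
        simp only [hz, norm_zero]
        simp
      rw [hxnorm] at this; norm_num at this
    set s : Bool := if 0 ≤ x j then true else false with hs
    set u : P := fun i => x (j.succAbove i) / m with hu
    refine mem_iUnion.mpr ⟨(j, s), ⟨u, ?_, ?_⟩⟩
    · -- u in closed ball
      rw [Metric.mem_closedBall, dist_zero_right]
      rw [pi_norm_le_iff_of_nonneg zero_le_one]
      intro i
      rw [hu, Real.norm_eq_abs, abs_div, abs_of_pos hm0]
      rw [div_le_one hm0]
      exact hj' _
    · -- evaluates to x
      have hgux : g j s u = m⁻¹ • x := by
        ext i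
        have : (m⁻¹ • x) i = m⁻¹ * x i := rfl
        rw [this]
        by_cases hij : i = j
        · subst hij
          rw [hgapply_same]
          by_cases h0 : 0 ≤ x i
          · have hmx : m = x i := abs_of_nonneg h0
            have hxne : x i ≠ 0 := by rw [← hmx]; exact hm0.ne'
            simp only [hs, if_pos h0, sgn, if_true]
            rw [hmx]
            field_simp
          · have hmx : m = -(x i) := abs_of_neg (not_le.mp h0)
            have hxne : x i ≠ 0 := (not_le.mp h0).ne
            simp only [hs, if_neg h0, sgn, Bool.false_eq_true, if_false]
            rw [hmx]
            field_simp
        · obtain ⟨k, rfl⟩ := Fin.exists_succAbove_eq hij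
          rw [hgapply_above, hu]
          field_simp
      show ‖g j s u‖⁻¹ • (g j s u) = x
      rw [hgux]
      have hnorm : ‖m⁻¹ • x‖ = m⁻¹ := by
        rw [norm_smul, Real.norm_eq_abs, abs_of_pos (by positivity), hxnorm, mul_one]
      rw [hnorm, inv_inv, smul_smul, mul_inv_cancel₀ hm0.ne', one_smul]
  -- put everything together
  have hμP : (μH[(n:ℝ)] : Measure P) (Metric.closedBall (0:P) 1) < ⊤ := by
    have hpi : (μH[(n:ℝ)] : Measure P) = volume := by
      rw [show ((n:ℝ)) = ((Fintype.card (Fin n) : ℕ) : ℝ) by simp]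
      exact hausdorffMeasure_pi_real
    rw [hpi]
    exact (isCompact_closedBall (0:P) 1).measure_lt_top
  calc μH[(n:ℝ)] (Metric.sphere (0 : E) 1)
      ≤ μH[(n:ℝ)] (⋃ p : Fin (n+1) × Bool, (r ∘ g p.1 p.2) '' Metric.closedBall (0:P) 1) :=
        measure_mono hcover
    _ ≤ ∑' p : Fin (n+1) × Bool, μH[(n:ℝ)] ((r ∘ g p.1 p.2) '' Metric.closedBall (0:P) 1) :=
        measure_iUnion_le _
    _ < ⊤ := by
        rw [tsum_fintype]
        refine ENNReal.sum_lt_top.mpr fun p _ => ?_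
        calc μH[(n:ℝ)] ((r ∘ g p.1 p.2) '' Metric.closedBall (0:P) 1)
            ≤ ((2 * (Real.sqrt n).toNNReal : ℝ≥0) : ℝ≥0∞) ^ (n:ℝ) *
              μH[(n:ℝ)] (Metric.closedBall (0:P) 1) :=
            (hcomp p.1 p.2).hausdorffMeasure_image_le (Nat.cast_nonneg n)
          _ < ⊤ := ENNReal.mul_lt_top
              (ENNReal.rpow_lt_top_of_nonneg (Nat.cast_nonneg n) ENNReal.coe_ne_top) hμP




lemma orthant_bound (d : ℕ) :
    (2:ℝ≥0∞) ^ d *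
      μH[(d:ℝ)-1] {x : EuclideanSpace ℝ (Fin d) | ‖x‖ = 1 ∧ ∀ i, 0 < x i} ≤
    μH[(d:ℝ)-1] (Metric.sphere (0 : EuclideanSpace ℝ (Fin d)) 1) := by
  classical
  set E := EuclideanSpace ℝ (Fin d)
  set μ : Measure E := μH[(d:ℝ)-1] with hμ
  set f : (Fin d → Bool) → E → E := fun ε x =>
    (WithLp.equiv 2 (Fin d → ℝ)).symm (fun i => sgn (ε i) * x i) with hf
  have hfapply : ∀ ε x i, f ε x i = sgn (ε i) * x i := by
    intro ε x i; simp [hf, PiLp.toLp_apply]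
  have hfinv : ∀ ε x, f ε (f ε x) = x := by
    intro ε x
    ext i
    rw [hfapply, hfapply, ← mul_assoc, sgn_mul_self, one_mul]
  have hfsurj : ∀ ε, Function.Surjective (f ε) := fun ε x => ⟨f ε x, hfinv ε x⟩
  have hfiso : ∀ ε, Isometry (f ε) := by
    intro ε
    apply Isometry.of_dist_eq
    intro x y
    rw [EuclideanSpace.dist_eq, EuclideanSpace.dist_eq]
    congr 1
    apply Finset.sum_congr rfl
    intro i _
    rw [hfapply, hfapply, Real.dist_eq, Real.dist_eq, ← mul_sub, abs_mul]
    cases hb : ε i <;> norm_num [sgn]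
  have hfzero : ∀ ε, f ε 0 = 0 := by
    intro ε
    ext i
    rw [hfapply]
    show sgn (ε i) * (0:ℝ) = (0:ℝ)
    exact mul_zero _
  have hnorm : ∀ ε (x : E), ‖f ε x‖ = ‖x‖ := fun ε x =>
    (hfiso ε).norm_map_of_map_zero (hfzero ε) x
  set Q : (Fin d → Bool) → Set E := fun ε => {x | ‖x‖ = 1 ∧ ∀ i, 0 < sgn (ε i) * x i}
    with hQ
  have hQtrue : Q (fun _ => true) = {x : E | ‖x‖ = 1 ∧ ∀ i, 0 < x i} := by
    ext x
    simp [hQ, sgn]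
  have himg : ∀ ε, f ε '' Q (fun _ => true) = Q ε := by
    intro ε
    rw [hQtrue]
    ext y
    constructor
    · rintro ⟨x, ⟨hx1, hx2⟩, rfl⟩
      refine ⟨by rw [hnorm, hx1], fun i => ?_⟩
      rw [hfapply, ← mul_assoc, sgn_mul_self, one_mul]
      exact hx2 i
    · rintro ⟨hy1, hy2⟩
      refine ⟨f ε y, ⟨by rw [hnorm, hy1], fun i => ?_⟩, hfinv ε y⟩
      rw [hfapply]
      exact hy2 i
  have hmeas : ∀ ε, MeasurableSet (Q ε) := by
    intro ε
    have h1 : ∀ i : Fin d, Continuous (fun x : E => sgn (ε i) * x i) := fun i =>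
      continuous_const.mul ((continuous_apply i).comp
        (PiLp.continuous_ofLp 2 (fun _ : Fin d => ℝ)))
    have hset : Q ε = {x : E | ‖x‖ = 1} ∩
        ⋂ i, (fun x : E => sgn (ε i) * x i) ⁻¹' Ioi 0 := by
      ext x
      simp [hQ, Set.mem_iInter]
    rw [hset]
    exact ((isClosed_eq continuous_norm continuous_const).measurableSet).inter
      (MeasurableSet.iInter fun i => (isOpen_Ioi.preimage (h1 i)).measurableSet)
  have hdisj : Pairwise (Function.onFun Disjoint Q) := by
    intro ε ε' hne
    rw [Function.onFun, Set.disjoint_left]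
    rintro x ⟨-, h1⟩ ⟨-, h2⟩
    obtain ⟨i, hi⟩ := Function.ne_iff.mp hne
    have a1 := h1 i
    have a2 := h2 i
    cases hb : ε i <;> cases hb' : ε' i <;> rw [hb] at a1 <;> rw [hb'] at a2 <;>
      simp [sgn] at a1 a2 hi
    · exact hi (hb.trans hb'.symm)
    · linarith
    · linarith
    · exact hi (hb.trans hb'.symm)
  have hQm : ∀ ε, μ (Q ε) = μ (Q (fun _ => true)) := fun ε => by
    rw [← himg ε, hμ]
    exact (hfiso ε).hausdorffMeasure_image (Or.inr (hfsurj ε)) _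
  have hsub : (⋃ ε, Q ε) ⊆ Metric.sphere (0:E) 1 := by
    intro x hx
    obtain ⟨ε, hx1, -⟩ := mem_iUnion.mp hx
    exact mem_sphere_zero_iff_norm.mpr hx1
  calc (2:ℝ≥0∞) ^ d * μ {x : E | ‖x‖ = 1 ∧ ∀ i, 0 < x i}
      = (2:ℝ≥0∞) ^ d * μ (Q (fun _ => true)) := by rw [hQtrue]
    _ = ∑' ε : Fin d → Bool, μ (Q ε) := by
        rw [tsum_congr hQm, tsum_fintype]
        rw [Finset.sum_const, Finset.card_univ, Fintype.card_fun]
        simp [nsmul_eq_mul]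
    _ = μ (⋃ ε, Q ε) := (measure_iUnion hdisj hmeas).symm
    _ ≤ μ (Metric.sphere (0:E) 1) := measure_mono hsub


set_option maxHeartbeats 1000000 in
/-- if `a_d ≥ 0` and `a_d · d^{3/2} → 0`, then there is `C > 0` such that
for all `d ≥ 1`, the set of points of the unit sphere of `ℝ^d` having at least one
coordinate `≤ -a_d` has `(d-1)`-dimensional Hausdorff measure at least
`(1 - C/2^d)·ω_{d-1}`. -/
theorem complement_sigma_volume_lower_bound (a : ℕ → ℝ) (ha : ∀ d, 0 ≤ a d)
    (hlim : Tendsto (fun d : ℕ => a d * (d : ℝ) ^ ((3 : ℝ) / 2)) atTop (nhds 0)) :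
    ∃ C : ℝ, 0 < C ∧ ∀ d : ℕ, 1 ≤ d →
      ENNReal.ofReal (1 - C / 2 ^ d) *
          μH[(d : ℝ) - 1] (Metric.sphere (0 : EuclideanSpace ℝ (Fin d)) 1) ≤
        μH[(d : ℝ) - 1]
          {x : EuclideanSpace ℝ (Fin d) |
            x ∈ Metric.sphere (0 : EuclideanSpace ℝ (Fin d)) 1 ∧
              ∃ i : Fin d, x i ≤ -(a d)} := by
  classical
  obtain ⟨D, hD⟩ := (Metric.tendsto_atTop.mp hlim) (1/16) (by norm_num)
  refine ⟨2 ^ (D + 2), by positivity, ?_⟩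
  intro d hd
  by_cases hdD : d < D
  · -- trivial case : the prefactor is `0`
    have h2d : (2:ℝ)^d ≤ 2^(D+2) := by
      apply pow_le_pow_right₀ (by norm_num)
      omega
    have hpos : (0:ℝ) < 2^d := by positivity
    have h1 : (1:ℝ) ≤ (2:ℝ)^(D+2) / 2^d := by
      rw [le_div_iff₀ hpos, one_mul]
      exact h2d
    rw [ENNReal.ofReal_eq_zero.mpr (by linarith), zero_mul]
    exact zero_le
  push_neg at hdD
  -- main case
  set E := EuclideanSpace ℝ (Fin d)
  have hd0 : (0:ℝ) < (d:ℝ) := by exact_mod_cast hd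
  set μ : Measure E := μH[(d:ℝ)-1] with hμ
  set S : Set E := Metric.sphere (0:E) 1 with hS
  set T : Set E := {x : E | x ∈ Metric.sphere (0:E) 1 ∧ ∃ i : Fin d, x i ≤ -(a d)} with hT
  set A : Set E := {x : E | x ∈ Metric.sphere (0:E) 1 ∧ ∀ i : Fin d, -(a d) < x i} with hA
  set Qs : Set E := {x : E | ‖x‖ = 1 ∧ ∀ i, 0 < x i} with hQs
  -- the quantitative smallness
  have ht16 : a d * (d:ℝ) ^ ((3:ℝ)/2) ≤ 1/16 := by
    have := hD d hdD
    rw [Real.dist_eq, sub_zero] at this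
    exact (le_abs_self _).trans this.le
  set t : ℝ := a d * Real.sqrt d with htdef
  have ht0 : 0 ≤ t := mul_nonneg (ha d) (Real.sqrt_nonneg _)
  have hd32 : (d:ℝ) ^ ((3:ℝ)/2) = (d:ℝ) * Real.sqrt d := by
    rw [show (3:ℝ)/2 = 1 + 1/2 by norm_num, Real.rpow_add hd0, Real.rpow_one,
      ← Real.sqrt_eq_rpow]
  have htd : t * d ≤ 1/16 := by
    calc t * d = a d * ((d:ℝ) * Real.sqrt d) := by rw [htdef]; ring
      _ = a d * (d:ℝ) ^ ((3:ℝ)/2) := by rw [hd32]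
      _ ≤ 1/16 := ht16
  have ht4 : t ≤ 1/4 := by nlinarith [mul_le_mul_of_nonneg_left (show (1:ℝ) ≤ d by exact_mod_cast hd) ht0]
  have h12t : (0:ℝ) < 1 - 2*t := by linarith
  -- the shift vector
  set v : E := (WithLp.equiv 2 (Fin d → ℝ)).symm (fun _ => a d) with hv
  have hvapply : ∀ i, v i = a d := by
    intro i; simp [hv, PiLp.toLp_apply]
  have hvnorm : ‖v‖ = t := by
    rw [EuclideanSpace.norm_eq]
    simp only [hvapply, Real.norm_eq_abs]
    rw [Finset.sum_const, Finset.card_univ, Fintype.card_fin, nsmul_eq_mul,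
      Real.sqrt_mul (Nat.cast_nonneg d), Real.sqrt_sq_eq_abs, htdef]
    rw [abs_abs, abs_of_nonneg (ha d)]
    ring
  -- the pushing map
  set ψ : E → E := fun x => ‖x + v‖⁻¹ • (x + v) with hψ
  have hmemA : ∀ x ∈ A, ‖x‖ = 1 ∧ ∀ i, -(a d) < x i := by
    rintro x ⟨hx1, hx2⟩
    exact ⟨mem_sphere_zero_iff_norm.mp hx1, hx2⟩
  have hXpos : ∀ x ∈ A, (∀ i, 0 < (x + v) i) ∧ 0 < ‖x + v‖ := by
    intro x hx
    obtain ⟨hx1, hx2⟩ := hmemA x hx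
    have hXi : ∀ i, 0 < (x + v) i := by
      intro i
      have : (x + v) i = x i + v i := rfl
      rw [this, hvapply]
      linarith [hx2 i]
    refine ⟨hXi, ?_⟩
    rw [norm_pos_iff]
    intro hzero
    have h0 := hXi ⟨0, hd⟩
    rw [hzero] at h0
    exact lt_irrefl 0 h0
  have hψQ : ∀ x ∈ A, ψ x ∈ Qs := by
    intro x hx
    obtain ⟨hXi, hXn⟩ := hXpos x hx
    constructor
    · rw [hψ]
      show ‖‖x + v‖⁻¹ • (x + v)‖ = 1
      rw [norm_smul, Real.norm_eq_abs, abs_of_pos (by positivity), inv_mul_cancel₀ hXn.ne']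
    · intro i
      show 0 < ‖x + v‖⁻¹ * (x + v) i
      exact mul_pos (by positivity) (hXi i)
  -- expansion estimate
  have hexp : ∀ x ∈ A, ∀ y ∈ A, dist x y ≤ (1 - 2*t)⁻¹ * dist (ψ x) (ψ y) := by
    intro x hx y hy
    obtain ⟨hx1, -⟩ := hmemA x hx
    obtain ⟨hy1, -⟩ := hmemA y hy
    have hkey := expand_lemma hx1 hy1 (v := v) (by rw [hvnorm]; exact ht4)
    rw [hvnorm] at hkey
    rw [dist_eq_norm, dist_eq_norm]
    calc ‖x - y‖ = (1-2*t)⁻¹ * ((1-2*t) * ‖x - y‖) := by field_simp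
      _ ≤ (1-2*t)⁻¹ * ‖ψ x - ψ y‖ := by
          exact mul_le_mul_of_nonneg_left hkey (by positivity)
  set K : ℝ≥0 := ((1 - 2*t)⁻¹).toNNReal with hKdef
  have hKco : (K : ℝ) = (1-2*t)⁻¹ := Real.coe_toNNReal _ (by positivity)
  have hinj : Set.InjOn ψ A := by
    intro x hx y hy hxy
    have := hexp x hx y hy
    rw [hxy, dist_self, mul_zero] at this
    exact dist_le_zero.mp this
  set φ : E → E := Function.invFunOn ψ A with hφ
  have hφA : ∀ p ∈ ψ '' A, φ p ∈ A ∧ ψ (φ p) = p := by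
    rintro p ⟨x, hx, rfl⟩
    exact ⟨Function.invFunOn_mem ⟨x, hx, rfl⟩, Function.invFunOn_eq ⟨x, hx, rfl⟩⟩
  have hφlip : LipschitzOnWith K φ (ψ '' A) := by
    apply LipschitzOnWith.of_dist_le_mul
    intro p hp q hq
    obtain ⟨hpA, hpe⟩ := hφA p hp
    obtain ⟨hqA, hqe⟩ := hφA q hq
    have h := hexp (φ p) hpA (φ q) hqA
    rw [hpe, hqe] at h
    rw [hKco]
    exact h
  have hφimg : φ '' (ψ '' A) = A := by
    apply subset_antisymm
    · rintro q ⟨p, hp, rfl⟩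
      exact (hφA p hp).1
    · intro x hx
      refine ⟨ψ x, ⟨x, hx, rfl⟩, ?_⟩
      exact hinj (hφA _ ⟨x, hx, rfl⟩).1 hx ((hφA _ ⟨x, hx, rfl⟩).2)
  have hδ0 : (0:ℝ) ≤ (d:ℝ) - 1 := by
    have : (1:ℝ) ≤ (d:ℝ) := by exact_mod_cast hd
    linarith
  have hμA1 : μ A ≤ (K:ℝ≥0∞) ^ ((d:ℝ)-1) * μ (ψ '' A) := by
    have := hφlip.hausdorffMeasure_image_le hδ0
    rw [hφimg] at this
    exact this
  -- the power of K is at most 2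
  have hKpow : (K:ℝ≥0∞) ^ ((d:ℝ)-1) ≤ 2 := by
    have hcast : ((d:ℝ)-1) = ((d-1 : ℕ):ℝ) := by
      rw [Nat.cast_sub hd, Nat.cast_one]
    rw [hcast, ENNReal.rpow_natCast, show (2:ℝ≥0∞) = ((2:ℝ≥0):ℝ≥0∞) by norm_cast,
      ← ENNReal.coe_pow, ENNReal.coe_le_coe, ← NNReal.coe_le_coe, NNReal.coe_pow, hKco]
    have hnle : ((d-1:ℕ):ℝ) ≤ (d:ℝ) := by
      exact_mod_cast Nat.sub_le d 1
    have hbern : (1:ℝ) - ((d-1:ℕ):ℝ) * (2*t) ≤ (1-2*t)^(d-1) := by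
      have := one_add_mul_le_pow (show (-2:ℝ) ≤ -(2*t) by linarith) (d-1)
      calc (1:ℝ) - ((d-1:ℕ):ℝ) * (2*t) = 1 + ((d-1:ℕ):ℝ) * (-(2*t)) := by ring
        _ ≤ (1 + -(2*t))^(d-1) := this
        _ = (1-2*t)^(d-1) := by ring_nf
    have hhalf : (1:ℝ)/2 ≤ (1-2*t)^(d-1) := by
      have h8 : ((d-1:ℕ):ℝ) * (2*t) ≤ 1/8 := by
        calc ((d-1:ℕ):ℝ) * (2*t) ≤ (d:ℝ) * (2*t) :=
            mul_le_mul_of_nonneg_right hnle (by linarith)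
          _ = 2 * (t * d) := by ring
          _ ≤ 1/8 := by linarith
      linarith
    calc ((1-2*t)⁻¹)^(d-1) = ((1-2*t)^(d-1))⁻¹ := by rw [inv_pow]
      _ ≤ ((1:ℝ)/2)⁻¹ := by
          apply inv_anti₀ (by norm_num) hhalf
      _ = ((2:ℝ≥0):ℝ) := by norm_num
  -- orthant bound
  have horth : (2:ℝ≥0∞) ^ d * μ Qs ≤ μ S := orthant_bound d
  -- finiteness of the sphere measure
  have hSfin : μ S < ⊤ := by
    obtain ⟨n, rfl⟩ : ∃ n, d = n + 1 := ⟨d - 1, by omega⟩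
    have hcast : ((n+1:ℕ):ℝ) - 1 = (n:ℝ) := by push_cast; ring
    rw [hμ, hS, hcast]
    exact sphere_hausdorff_lt_top n
  -- subadditivity
  have hSsub : S ⊆ T ∪ A := by
    intro x hx
    by_cases hc : ∃ i, x i ≤ -(a d)
    · left; exact ⟨hx, hc⟩
    · right
      push_neg at hc
      exact ⟨hx, hc⟩
  have hST : μ S ≤ μ T + μ A := (measure_mono hSsub).trans (measure_union_le T A)
  -- the bound on μ A
  have h2dpos : (0:ℝ) < 2^d := by positivity
  have hμA3 : μ A ≤ ENNReal.ofReal (2/2^d) * μ S := by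
    have hstep1 : μ A ≤ 2 * μ Qs := by
      calc μ A ≤ (K:ℝ≥0∞) ^ ((d:ℝ)-1) * μ (ψ '' A) := hμA1
        _ ≤ 2 * μ Qs := by
            apply mul_le_mul' hKpow
            apply measure_mono
            rintro p ⟨x, hx, rfl⟩
            exact hψQ x hx
    have hQle : μ Qs ≤ μ S / 2^d := by
      rw [ENNReal.le_div_iff_mul_le (Or.inl (by positivity)) (Or.inl (by simp))]
      rw [mul_comm]
      exact horth
    have heq : ENNReal.ofReal (2/2^d) = 2 / 2^d := by
      rw [ENNReal.ofReal_div_of_pos (by positivity), ENNReal.ofReal_pow (by norm_num)]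
      norm_num
    calc μ A ≤ 2 * μ Qs := hstep1
      _ ≤ 2 * (μ S / 2^d) := mul_le_mul_right hQle 2
      _ = (2 / 2^d) * μ S := by
          rw [div_eq_mul_inv, div_eq_mul_inv]
          ring
      _ = ENNReal.ofReal (2/2^d) * μ S := by rw [heq]
  -- final arithmetic
  have hc0 : (0:ℝ) ≤ 2/2^d := by positivity
  have hc1 : 2/2^d ≤ (1:ℝ) := by
    rw [div_le_one h2dpos]
    calc (2:ℝ) = 2^1 := by norm_num
      _ ≤ 2^d := pow_le_pow_right₀ (by norm_num) hd
  have hsum : ENNReal.ofReal (1-2/2^d) * μ S + ENNReal.ofReal (2/2^d) * μ S = μ S := by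
    rw [← add_mul, ← ENNReal.ofReal_add (by linarith) hc0, sub_add_cancel,
      ENNReal.ofReal_one, one_mul]
  have hfin2 : ENNReal.ofReal (2/2^d) * μ S ≠ ⊤ :=
    ENNReal.mul_ne_top ENNReal.ofReal_ne_top hSfin.ne
  have h5 : μ S ≤ μ T + ENNReal.ofReal (2/2^d) * μ S :=
    hST.trans (add_le_add_right hμA3 (μ T))
  have h6 : ENNReal.ofReal (1-2/2^d) * μ S ≤ μ T := by
    rw [ENNReal.eq_sub_of_add_eq hfin2 hsum]
    exact tsub_le_iff_right.mpr h5
  refine le_trans ?_ h6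
  apply mul_le_mul_left
  apply ENNReal.ofReal_le_ofReal
  have h7 : (2:ℝ)/2^d ≤ 2^(D+2)/2^d := by
    gcongr
    calc (2:ℝ) = 2^1 := by norm_num
      _ ≤ 2^(D+2) := pow_le_pow_right₀ (by norm_num) (by omega)
  linarith
end

section
/- Let ε ∈ (0,1) and let d ≥ 1 be an integer with d·ε² ≤ 1. Then for every real a with 0 ≤ a ≤ ε/√(d+1-d·ε²), one has a·ω_{d-1}/ω_d ≤ ε, where ω_{d-1} and ω_d are the (d-1)- and d-dimensional Hausdorff measures of the unit spheres S^{d-1} ⊆ ℝ^d and S^d ⊆ ℝ^{d+1} respectively. -/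
open MeasureTheory Set ENNReal NNReal

variable {n : ℕ}


/-- Eilenberg-type slicing inequality: if every slice `A ∩ f⁻¹ {t}`, `t ∈ (u, v]`,
of `A` under a `1`-Lipschitz function `f : Z → ℝ` admits a `1`-Lipschitz map onto
a superset of `B`, then `(v - u) * μH[s] B ≤ μH[s+1] A`. -/
theorem slicing_le {Z : Type*} [EMetricSpace Z] [MeasurableSpace Z] [BorelSpace Z]
    (f : Z → ℝ) (hf : LipschitzWith 1 f) (A B : Set Z) (s : ℝ) (hs : 0 ≤ s)
    (u v : ℝ)
    (hB : ∀ t ∈ Set.Ioc u v, ∃ g : Z → Z, LipschitzWith 1 g ∧ B ⊆ g '' (A ∩ f ⁻¹' {t})) :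
    ENNReal.ofReal (v - u) * μH[s] B ≤ μH[s + 1] A := by
  rw [MeasureTheory.Measure.hausdorffMeasure_apply, MeasureTheory.Measure.hausdorffMeasure_apply, ENNReal.mul_iSup]
  refine iSup_le fun r => ?_
  rw [ENNReal.mul_iSup]
  refine iSup_le fun hr => ?_
  set r' : ℝ≥0∞ := min r 1 with hr'def
  have hr' : 0 < r' := lt_min hr one_pos
  refine le_trans ?_ (le_iSup_of_le r' (le_iSup_of_le hr' le_rfl))
  have hmono : (⨅ (t : ℕ → Set Z) (_ : B ⊆ ⋃ n, t n) (_ : ∀ n, EMetric.diam (t n) ≤ r),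
        ∑' n, ⨆ _ : (t n).Nonempty, EMetric.diam (t n) ^ s) ≤
      ⨅ (t : ℕ → Set Z) (_ : B ⊆ ⋃ n, t n) (_ : ∀ n, EMetric.diam (t n) ≤ r'),
        ∑' n, ⨆ _ : (t n).Nonempty, EMetric.diam (t n) ^ s := by
    refine le_iInf fun t => le_iInf fun hc => le_iInf fun hd => ?_
    exact iInf_le_of_le t (iInf_le_of_le hc (iInf_le_of_le
      (fun n => (hd n).trans (min_le_left _ _)) le_rfl))
  refine le_trans (_root_.mul_le_mul_right hmono _) ?_
  refine le_iInf fun U => le_iInf fun hU => le_iInf fun hdiam => ?_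
  -- `U` is a countable cover of `A` with diameters at most `r' ≤ 1`.
  have hdiam1 : ∀ n, EMetric.diam (U n) ≤ 1 := fun n => (hdiam n).trans (min_le_right _ _)
  set T : ℕ → Set ℝ := fun n => f '' (U n ∩ A) with hT
  have hTb : ∀ n, Bornology.IsBounded (T n) := by
    intro n
    rw [Metric.isBounded_iff_ediam_ne_top]
    refine ne_top_of_le_ne_top (by simp : (1 : ℝ≥0∞) ≠ ⊤) ?_
    calc EMetric.diam (T n) ≤ 1 * EMetric.diam (U n ∩ A) := hf.ediam_image_le _
      _ ≤ EMetric.diam (U n) := by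
          rw [one_mul]; exact EMetric.diam_mono (Set.inter_subset_left)
      _ ≤ 1 := hdiam1 n
  set J : ℕ → Set ℝ := fun n => Set.Icc (sInf (T n)) (sSup (T n)) with hJ
  -- Step 1: pointwise slice bound
  have step1 : ∀ t ∈ Set.Ioc u v,
      (⨅ (t : ℕ → Set Z) (_ : B ⊆ ⋃ n, t n) (_ : ∀ n, EMetric.diam (t n) ≤ r'),
        ∑' n, ⨆ _ : (t n).Nonempty, EMetric.diam (t n) ^ s) ≤
      ∑' n, (J n).indicator (fun _ => EMetric.diam (U n) ^ s) t := by
    intro t ht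
    obtain ⟨g, hg, hBg⟩ := hB t ht
    set W : ℕ → Set Z := fun n => g '' (U n ∩ A ∩ f ⁻¹' {t}) with hW
    have hWd : ∀ n, EMetric.diam (W n) ≤ EMetric.diam (U n) := by
      intro n
      calc EMetric.diam (W n) ≤ 1 * EMetric.diam (U n ∩ A ∩ f ⁻¹' {t}) := hg.ediam_image_le _
        _ ≤ EMetric.diam (U n) := by
            rw [one_mul]
            exact EMetric.diam_mono ((Set.inter_subset_left).trans Set.inter_subset_left)
    have hcov : B ⊆ ⋃ n, W n := by
      refine hBg.trans ?_
      rintro x ⟨y, ⟨hyA, hyt⟩, rfl⟩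
      rcases Set.mem_iUnion.1 (hU hyA) with ⟨n, hn⟩
      exact Set.mem_iUnion.2 ⟨n, Set.mem_image_of_mem g ⟨⟨hn, hyA⟩, hyt⟩⟩
    refine le_trans (iInf_le_of_le W (iInf_le_of_le hcov (iInf_le_of_le
      (fun n => (hWd n).trans (hdiam n)) le_rfl))) ?_
    refine ENNReal.tsum_le_tsum fun n => ?_
    refine iSup_le fun hne => ?_
    obtain ⟨x, ⟨⟨hxU, hxA⟩, hxt⟩, -⟩ : ∃ y, y ∈ U n ∩ A ∩ f ⁻¹' {t} ∧ True := by
      obtain ⟨w, y, hy, -⟩ := hne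
      exact ⟨y, hy, trivial⟩
    have htT : t ∈ T n := ⟨x, ⟨hxU, hxA⟩, hxt⟩
    have htJ : t ∈ J n :=
      ⟨csInf_le (hTb n).bddBelow htT, le_csSup (hTb n).bddAbove htT⟩
    rw [Set.indicator_of_mem htJ]
    exact ENNReal.rpow_le_rpow (hWd n) hs
  -- Step 2: integrate over `Ioc u v`
  set c : ℝ≥0∞ := ⨅ (t : ℕ → Set Z) (_ : B ⊆ ⋃ n, t n)
      (_ : ∀ n, EMetric.diam (t n) ≤ r'),
      ∑' n, ⨆ _ : (t n).Nonempty, EMetric.diam (t n) ^ s with hc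
  have hmeas : Measurable fun t : ℝ => ∑' n, (J n).indicator
      (fun _ => EMetric.diam (U n) ^ s) t :=
    Measurable.ennreal_tsum fun n => measurable_const.indicator measurableSet_Icc
  have key : ENNReal.ofReal (v - u) * c ≤
      ∑' n, EMetric.diam (U n) ^ s * EMetric.diam (U n) := by
    calc ENNReal.ofReal (v - u) * c = ∫⁻ _ in Set.Ioc u v, c := by
          rw [setLIntegral_const, Real.volume_Ioc, mul_comm]
      _ ≤ ∫⁻ t in Set.Ioc u v, ∑' n, (J n).indicator
            (fun _ => EMetric.diam (U n) ^ s) t := setLIntegral_mono hmeas step1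
      _ ≤ ∫⁻ t, ∑' n, (J n).indicator (fun _ => EMetric.diam (U n) ^ s) t :=
          setLIntegral_le_lintegral _ _
      _ = ∑' n, ∫⁻ t, (J n).indicator (fun _ => EMetric.diam (U n) ^ s) t :=
          lintegral_tsum fun n =>
            (measurable_const.indicator measurableSet_Icc).aemeasurable
      _ ≤ ∑' n, EMetric.diam (U n) ^ s * EMetric.diam (U n) := by
          refine ENNReal.tsum_le_tsum fun n => ?_
          rw [lintegral_indicator measurableSet_Icc, setLIntegral_const]
          refine _root_.mul_le_mul_right ?_ _
          rcases (T n).eq_empty_or_nonempty with hT0 | hT0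
          · simp [hJ, hT0, Real.sInf_empty, Real.sSup_empty]
          · calc volume (J n) = ENNReal.ofReal (sSup (T n) - sInf (T n)) :=
                  Real.volume_Icc
              _ = EMetric.diam (T n) := (Real.ediam_eq (hTb n)).symm
              _ ≤ 1 * EMetric.diam (U n ∩ A) := hf.ediam_image_le _
              _ ≤ EMetric.diam (U n) := by
                  rw [one_mul]; exact EMetric.diam_mono Set.inter_subset_left
  refine key.trans (ENNReal.tsum_le_tsum fun n => ?_)
  rcases (U n).eq_empty_or_nonempty with h0 | h0
  · simp [h0, EMetric.diam]
  · rw [iSup_pos h0]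
    rcases eq_or_ne (EMetric.diam (U n)) 0 with hz | hz
    · rw [hz, mul_zero]; exact zero_le
    · show EMetric.diam (U n) ^ s * EMetric.diam (U n) ≤ EMetric.diam (U n) ^ (s + 1)
      rw [ENNReal.rpow_add s 1 hz (ne_top_of_le_ne_top (by simp) (hdiam1 n)),
        ENNReal.rpow_one]


noncomputable def toL2 (n : ℕ) : (Fin n → ℝ) ≃ EuclideanSpace ℝ (Fin n) :=
  (WithLp.equiv 2 (Fin n → ℝ)).symm

@[simp] theorem toL2_apply {n : ℕ} (g : Fin n → ℝ) (i : Fin n) : toL2 n g i = g i := rfl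

theorem sum_sq_eq_one {n : ℕ} (y : EuclideanSpace ℝ (Fin n)) (hy : ‖y‖ = 1) :
    ∑ i, ‖y i‖ ^ 2 = 1 := by
  have := (EuclideanSpace.norm_eq y).symm.trans hy
  rw [show (1:ℝ) = Real.sqrt 1 by rw [Real.sqrt_one]] at this
  exact (Real.sqrt_inj (Finset.sum_nonneg fun i _ => sq_nonneg _) zero_le_one).1 this

theorem norm_toL2_snoc {n : ℕ} (c b : ℝ) (y : EuclideanSpace ℝ (Fin n)) (hy : ‖y‖ = 1) :
    ‖toL2 (n + 1) (Fin.snoc (fun i => c * y i) b)‖ = Real.sqrt (c ^ 2 + b ^ 2) := by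
  rw [EuclideanSpace.norm_eq]
  congr 1
  rw [Fin.sum_univ_castSucc]
  simp only [toL2_apply, Fin.snoc_castSucc, Fin.snoc_last]
  have : ∑ i : Fin n, ‖c * y i‖ ^ 2 = c ^ 2 := by
    simp only [norm_mul, mul_pow, ← Finset.mul_sum, sum_sq_eq_one y hy]
    rw [show ‖c‖ ^ 2 = c ^ 2 from sq_abs c, mul_one]
  rw [this, Real.norm_eq_abs, sq_abs]


variable {n : ℕ}


theorem dist_coord_le (i : Fin n) (x y : EuclideanSpace ℝ (Fin n)) :
    dist (x i) (y i) ≤ dist x y := by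
  rw [EuclideanSpace.dist_eq]
  refine (Real.le_sqrt dist_nonneg (Finset.sum_nonneg fun j _ => sq_nonneg _)).mpr ?_
  exact Finset.single_le_sum (f := fun j => dist (x j) (y j) ^ 2)
    (fun j _ => sq_nonneg _) (Finset.mem_univ i)

theorem lip_proj (i : Fin n) :
    LipschitzWith 1 (fun x : EuclideanSpace ℝ (Fin n) => x i) := by
  refine LipschitzWith.of_dist_le_mul fun x y => ?_
  rw [NNReal.coe_one, one_mul]
  exact dist_coord_le i x y

/-- scaling the first `n` coordinates by `c` with `|c| ≤ 1` and setting the last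
coordinate to a constant is `1`-Lipschitz. -/
theorem lip_snoc_scale (c b : ℝ) (hc : |c| ≤ 1) :
    LipschitzWith 1 (fun x : EuclideanSpace ℝ (Fin (n + 1)) =>
      toL2 (n + 1) (Fin.snoc (fun i : Fin n => c * x i.castSucc) b)) := by
  refine LipschitzWith.of_dist_le_mul fun x y => ?_
  rw [NNReal.coe_one, one_mul, EuclideanSpace.dist_eq, EuclideanSpace.dist_eq]
  refine Real.sqrt_le_sqrt ?_
  rw [Fin.sum_univ_castSucc, Fin.sum_univ_castSucc]
  simp only [toL2_apply, Fin.snoc_castSucc, Fin.snoc_last]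
  have h1 : ∀ i : Fin n, dist (c * x i.castSucc) (c * y i.castSucc) ^ 2 ≤
      dist (x i.castSucc) (y i.castSucc) ^ 2 := by
    intro i
    rw [Real.dist_eq, Real.dist_eq, ← mul_sub, abs_mul]
    have := mul_le_of_le_one_left (abs_nonneg (x i.castSucc - y i.castSucc)) hc
    exact pow_le_pow_left₀ (by positivity) this 2
  calc ∑ i : Fin n, dist (c * x i.castSucc) (c * y i.castSucc) ^ 2 + dist b b ^ 2
      = ∑ i : Fin n, dist (c * x i.castSucc) (c * y i.castSucc) ^ 2 := by simp
    _ ≤ ∑ i : Fin n, dist (x i.castSucc) (y i.castSucc) ^ 2 :=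
        Finset.sum_le_sum fun i _ => h1 i
    _ ≤ _ := le_add_of_nonneg_right (sq_nonneg _)

/-- scaling the first `n` coordinates by `c ≥ 0` (dropping the last) is `c`-Lipschitz. -/
theorem lip_init_scale (c : ℝ) (hc : 0 ≤ c) :
    LipschitzWith ⟨c, hc⟩ (fun x : EuclideanSpace ℝ (Fin (n + 1)) =>
      toL2 n (fun i : Fin n => c * x i.castSucc)) := by
  refine LipschitzWith.of_dist_le_mul fun x y => ?_
  rw [EuclideanSpace.dist_eq, EuclideanSpace.dist_eq]
  change _ ≤ c * _
  have hrhs : c * Real.sqrt (∑ i, dist (x i) (y i) ^ 2) =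
      Real.sqrt (c ^ 2 * ∑ i, dist (x i) (y i) ^ 2) := by
    rw [Real.sqrt_mul (sq_nonneg c), Real.sqrt_sq hc]
  rw [hrhs]
  refine Real.sqrt_le_sqrt ?_
  rw [Fin.sum_univ_castSucc (f := fun i => dist (x i) (y i) ^ 2), mul_add,
    Finset.mul_sum]
  refine le_add_of_le_of_nonneg (Finset.sum_le_sum fun i _ => ?_) (by positivity)
  simp only [toL2_apply]
  rw [Real.dist_eq, Real.dist_eq, ← mul_sub, abs_mul, mul_pow, abs_of_nonneg hc]

theorem pow_ineq (d : ℕ) (hd : 1 ≤ d) : ((d : ℝ) + 1) ^ d ≤ 4 * (d : ℝ) ^ d := by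
  have hd0 : (0 : ℝ) < d := by exact_mod_cast hd
  have hexp : (1 + 1 / (d : ℝ)) ^ d ≤ 4 := by
    have e1 : 1 + 1 / (d : ℝ) ≤ Real.exp (1 / d) := by
      have := Real.add_one_le_exp (1 / (d : ℝ)); linarith
    have e2 : (1 + 1 / (d : ℝ)) ^ d ≤ Real.exp (1 / d) ^ d :=
      pow_le_pow_left₀ (by positivity) e1 d
    have e3 : Real.exp (1 / (d : ℝ)) ^ d = Real.exp 1 := by
      rw [← Real.exp_nat_mul]
      congr 1
      field_simp
    have e4 : Real.exp 1 ≤ 4 := Real.exp_one_lt_d9.le.trans (by norm_num)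
    calc (1 + 1 / (d : ℝ)) ^ d ≤ Real.exp (1 / d) ^ d := e2
      _ = Real.exp 1 := e3
      _ ≤ 4 := e4
  have h1 : ((d : ℝ) + 1) / (d : ℝ) = 1 + 1 / d := by field_simp
  have h2 : (((d : ℝ) + 1) / (d : ℝ)) ^ d ≤ 4 := by rw [h1]; exact hexp
  rw [div_pow, div_le_iff₀ (by positivity)] at h2
  linarith

theorem core_ineq (d : ℕ) (hd : 1 ≤ d) :
    (Real.sqrt d)⁻¹ ≤
      2 * (Real.sqrt ((d : ℝ) + 1))⁻¹ * Real.sqrt ((d : ℝ) / ((d : ℝ) + 1)) ^ (d - 1) := by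
  have hd0 : (0 : ℝ) < d := by exact_mod_cast hd
  have hd1 : (0 : ℝ) < (d : ℝ) + 1 := by positivity
  set m : ℕ := d - 1 with hm
  have hmd : m + 1 = d := by omega
  set s0 : ℝ := (Real.sqrt ((d : ℝ) + 1))⁻¹ with hs0
  set ρ : ℝ := Real.sqrt ((d : ℝ) / ((d : ℝ) + 1)) with hρ
  have hs0pos : 0 < s0 := by positivity
  have hρpos : 0 < ρ := Real.sqrt_pos.2 (by positivity)
  have hs0sq : s0 ^ 2 = ((d : ℝ) + 1)⁻¹ := by
    rw [hs0, ← Real.sqrt_inv, Real.sq_sqrt (by positivity)]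
  have hρsq : ρ ^ 2 = (d : ℝ) / ((d : ℝ) + 1) := Real.sq_sqrt (by positivity)
  have hrhs_pos : 0 < 2 * s0 * ρ ^ m := by positivity
  have hcore2 : (d : ℝ)⁻¹ ≤ (2 * s0 * ρ ^ m) ^ 2 := by
    have hexpand : (2 * s0 * ρ ^ m) ^ 2 = 4 * ((d : ℝ) + 1)⁻¹ *
        ((d : ℝ) / ((d : ℝ) + 1)) ^ m := by
      rw [mul_pow, mul_pow, ← pow_mul, mul_comm m 2, pow_mul, hρsq, hs0sq]
      ring
    rw [hexpand]
    have hr : 4 * ((d : ℝ) + 1)⁻¹ * ((d : ℝ) / ((d : ℝ) + 1)) ^ m =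
        (4 * (d : ℝ) ^ m) / (((d : ℝ) + 1) ^ (m + 1)) := by
      rw [div_pow, pow_succ]
      field_simp
    rw [hr, inv_eq_one_div, div_le_div_iff₀ hd0 (by positivity)]
    have h1 : ((d : ℝ) + 1) ^ (m + 1) = ((d : ℝ) + 1) ^ d := by rw [hmd]
    have h2 : 4 * (d : ℝ) ^ m * (d : ℝ) = 4 * (d : ℝ) ^ d := by
      rw [mul_assoc, ← pow_succ, hmd]
    rw [one_mul, h1, h2]
    exact pow_ineq d hd
  have h3 : (Real.sqrt d)⁻¹ = Real.sqrt ((d : ℝ)⁻¹) := (Real.sqrt_inv _).symm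
  rw [h3]
  calc Real.sqrt ((d : ℝ)⁻¹) ≤ Real.sqrt ((2 * s0 * ρ ^ m) ^ 2) :=
        Real.sqrt_le_sqrt hcore2
    _ = 2 * s0 * ρ ^ m := Real.sqrt_sq hrhs_pos.le

set_option maxHeartbeats 1000000 in
/-- for `ε ∈ (0,1)`, `d ≥ 1` with `d·ε² ≤ 1`, and
`0 ≤ a ≤ ε/√(d+1-d·ε²)`, one has `a·ω_{d-1}/ω_d ≤ ε`. -/
theorem a_times_sphere_ratio_le (ε : ℝ) (hε0 : 0 < ε) (hε1 : ε < 1)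
    (d : ℕ) (hd : 1 ≤ d) (hdε : (d : ℝ) * ε ^ 2 ≤ 1)
    (a : ℝ) (ha0 : 0 ≤ a)
    (ha : a ≤ ε / Real.sqrt ((d : ℝ) + 1 - (d : ℝ) * ε ^ 2)) :
    ENNReal.ofReal a *
        μH[(d : ℝ) - 1] (Metric.sphere (0 : EuclideanSpace ℝ (Fin d)) 1) /
        μH[(d : ℝ)] (Metric.sphere (0 : EuclideanSpace ℝ (Fin (d + 1))) 1) ≤
      ENNReal.ofReal ε := by
  have hd0 : (0 : ℝ) < d := by exact_mod_cast hd
  have hd1 : (0 : ℝ) < (d : ℝ) + 1 := by positivity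
  set s0 : ℝ := (Real.sqrt ((d : ℝ) + 1))⁻¹ with hs0def
  set ρ : ℝ := Real.sqrt ((d : ℝ) / ((d : ℝ) + 1)) with hρdef
  have hs0pos : 0 < s0 := by positivity
  have hρpos : 0 < ρ := Real.sqrt_pos.2 (by positivity)
  have hs0sq : s0 ^ 2 = ((d : ℝ) + 1)⁻¹ := by
    rw [hs0def, ← Real.sqrt_inv, Real.sq_sqrt (by positivity)]
  have hρsq : ρ ^ 2 = (d : ℝ) / ((d : ℝ) + 1) := Real.sq_sqrt (by positivity)
  have hsum : ρ ^ 2 + s0 ^ 2 = 1 := by rw [hρsq, hs0sq]; field_simp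
  have hs0lt1 : s0 < 1 := by
    have hlt : ((d : ℝ) + 1)⁻¹ < 1 := by
      rw [inv_lt_one_iff₀]; right; linarith
    nlinarith [hs0sq, hs0pos, sq_nonneg (s0 - 1)]
  set F : EuclideanSpace ℝ (Fin d) → EuclideanSpace ℝ (Fin (d + 1)) := fun y => toL2 (d + 1) (Fin.snoc (fun i => ρ * y i) s0) with hF
  set Bset : Set (EuclideanSpace ℝ (Fin (d + 1))) := F '' Metric.sphere 0 1 with hBset
  set f : EuclideanSpace ℝ (Fin (d + 1)) → ℝ := fun x => x (Fin.last d) with hf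
  set fneg : EuclideanSpace ℝ (Fin (d + 1)) → ℝ := fun x => -x (Fin.last d) with hfneg
  have hflip : LipschitzWith 1 f := lip_proj (Fin.last d)
  have hfneglip : LipschitzWith 1 fneg := by
    have : fneg = fun x => -f x := rfl
    rw [this]; exact LipschitzWith.neg hflip
  set Apos : Set (EuclideanSpace ℝ (Fin (d + 1))) := Metric.sphere 0 1 ∩ f ⁻¹' Set.Ioc 0 s0 with hApos
  set Aneg : Set (EuclideanSpace ℝ (Fin (d + 1))) := Metric.sphere 0 1 ∩ fneg ⁻¹' Set.Ioc 0 s0 with hAneg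
  have hsR : (0 : ℝ) ≤ (d : ℝ) - 1 := by
    have : (1 : ℝ) ≤ d := by exact_mod_cast hd
    linarith
  -- the slice hypothesis, for both signs
  have hslice : ∀ σ : ℝ, σ = 1 ∨ σ = -1 → ∀ f' : EuclideanSpace ℝ (Fin (d + 1)) → ℝ,
      (∀ x, f' x = σ * x (Fin.last d)) → ∀ t ∈ Set.Ioc (0 : ℝ) s0,
      ∃ g : EuclideanSpace ℝ (Fin (d + 1)) → EuclideanSpace ℝ (Fin (d + 1)), LipschitzWith 1 g ∧
        Bset ⊆ g '' ((Metric.sphere 0 1 ∩ f' ⁻¹' Set.Ioc 0 s0) ∩ f' ⁻¹' {t}) := by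
    intro σ hσ f' hf' t ht
    have hσsq : σ ^ 2 = 1 := by rcases hσ with h | h <;> rw [h] <;> norm_num
    have ht0 : 0 < t := ht.1
    have hts0 : t ≤ s0 := ht.2
    have ht1 : t < 1 := lt_of_le_of_lt hts0 hs0lt1
    set ρt : ℝ := Real.sqrt (1 - t ^ 2) with hρt
    have hρtsq : ρt ^ 2 = 1 - t ^ 2 := Real.sq_sqrt (by nlinarith)
    have hρtpos : 0 < ρt := Real.sqrt_pos.2 (by nlinarith)
    have hρρt : ρ ≤ ρt := by
      rw [hρdef, hρt]
      refine Real.sqrt_le_sqrt ?_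
      have h1 : (d : ℝ) / ((d : ℝ) + 1) = 1 - s0 ^ 2 := by rw [hs0sq]; field_simp; ring
      nlinarith
    set c : ℝ := ρ / ρt with hc
    have hcabs : |c| ≤ 1 := by
      rw [abs_of_nonneg (by positivity)]
      rw [div_le_one hρtpos]
      exact hρρt
    refine ⟨fun x => toL2 (d + 1) (Fin.snoc (fun i => c * x i.castSucc) s0),
      lip_snoc_scale c s0 hcabs, ?_⟩
    rintro b ⟨y, hy, rfl⟩
    have hynorm : ‖y‖ = 1 := by
      rwa [mem_sphere_zero_iff_norm] at hy
    set p : EuclideanSpace ℝ (Fin (d + 1)) := toL2 (d + 1) (Fin.snoc (fun i => ρt * y i) (σ * t)) with hp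
    have hplast : p (Fin.last d) = σ * t := by simp [hp]
    have hpsphere : p ∈ Metric.sphere (0 : EuclideanSpace ℝ (Fin (d + 1))) 1 := by
      rw [mem_sphere_zero_iff_norm, hp, norm_toL2_snoc ρt (σ * t) y hynorm]
      rw [mul_pow, hσsq, one_mul, hρtsq]
      simp
    have hfp : f' p = t := by
      rw [hf' p, hplast, ← mul_assoc, ← sq, hσsq, one_mul]
    refine ⟨p, ⟨⟨hpsphere, ?_⟩, ?_⟩, ?_⟩
    · show f' p ∈ Set.Ioc 0 s0
      rw [hfp]; exact ht
    · show f' p ∈ ({t} : Set ℝ)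
      rw [hfp]; rfl
    · show toL2 (d + 1) (Fin.snoc (fun i => c * p i.castSucc) s0) = F y
      rw [hF]
      congr 1
      funext i
      induction i using Fin.lastCases with
      | last => simp
      | cast j =>
        simp only [Fin.snoc_castSucc, hp, toL2_apply]
        rw [hc]
        field_simp
  -- apply the slicing lemma to both bands
  have hBpos : ENNReal.ofReal s0 * μH[(d : ℝ) - 1] Bset ≤ μH[((d : ℝ) - 1) + 1] Apos := by
    have := slicing_le f hflip Apos Bset ((d : ℝ) - 1) hsR 0 s0 ?_
    · rwa [sub_zero] at this
    · intro t ht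
      exact hslice 1 (Or.inl rfl) f (fun x => (one_mul _).symm) t ht
  have hBneg : ENNReal.ofReal s0 * μH[(d : ℝ) - 1] Bset ≤ μH[((d : ℝ) - 1) + 1] Aneg := by
    have := slicing_le fneg hfneglip Aneg Bset ((d : ℝ) - 1) hsR 0 s0 ?_
    · rwa [sub_zero] at this
    · intro t ht
      exact hslice (-1) (Or.inr rfl) fneg (fun x => (neg_one_mul _).symm) t ht
  rw [show ((d : ℝ) - 1) + 1 = (d : ℝ) by ring] at hBpos hBneg
  -- lower bound for the sphere measure of `Bset` in terms of `X`
  set X := μH[(d : ℝ) - 1] (Metric.sphere (0 : EuclideanSpace ℝ (Fin d)) 1) with hX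
  set Y := μH[(d : ℝ)] (Metric.sphere (0 : EuclideanSpace ℝ (Fin (d + 1))) 1) with hY
  set K : ℝ≥0 := Real.toNNReal ρ⁻¹ with hK
  have hXB : X ≤ (K : ℝ≥0∞) ^ ((d : ℝ) - 1) * μH[(d : ℝ) - 1] Bset := by
    set G : EuclideanSpace ℝ (Fin (d + 1)) → EuclideanSpace ℝ (Fin d) := fun x => toL2 d (fun i => ρ⁻¹ * x i.castSucc) with hG
    have hGlip : LipschitzWith K G := by
      have h := lip_init_scale (n := d) ρ⁻¹ (by positivity)
      have : (⟨ρ⁻¹, by positivity⟩ : ℝ≥0) = K := by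
        rw [hK]; ext; simp [Real.toNNReal_of_nonneg (le_of_lt (by positivity : (0:ℝ) < ρ⁻¹))]
      rwa [this] at h
    have hsub : Metric.sphere (0 : EuclideanSpace ℝ (Fin d)) 1 ⊆ G '' Bset := by
      intro y hy
      refine ⟨F y, Set.mem_image_of_mem F hy, ?_⟩
      have h1 : (fun i : Fin d => ρ⁻¹ * (F y) i.castSucc) = fun i => y i := by
        funext i
        show ρ⁻¹ * (Fin.snoc (fun i => ρ * y i) s0 : Fin (d + 1) → ℝ) i.castSucc = y i
        rw [Fin.snoc_castSucc]
        field_simp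
      show toL2 d (fun i => ρ⁻¹ * (F y) i.castSucc) = y
      rw [h1]
      rfl
    calc X ≤ μH[(d : ℝ) - 1] (G '' Bset) := measure_mono hsub
      _ ≤ (K : ℝ≥0∞) ^ ((d : ℝ) - 1) * μH[(d : ℝ) - 1] Bset :=
          hGlip.hausdorffMeasure_image_le hsR Bset
  -- additivity over the two bands
  have hAnegm : MeasurableSet Aneg := by
    refine (Metric.isClosed_sphere.measurableSet).inter ?_
    exact (hfneglip.continuous.measurable) measurableSet_Ioc
  have hdisj : Disjoint Apos Aneg := by
    rw [Set.disjoint_left]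
    rintro x ⟨-, hx1⟩ ⟨-, hx2⟩
    have h1 : 0 < x (Fin.last d) := hx1.1
    have h2 : 0 < -x (Fin.last d) := hx2.1
    linarith
  have hYlb : μH[(d : ℝ)] Apos + μH[(d : ℝ)] Aneg ≤ Y := by
    rw [← measure_union hdisj hAnegm]
    exact measure_mono (Set.union_subset Set.inter_subset_left Set.inter_subset_left)
  -- the coefficient inequality over the reals
  set m : ℕ := d - 1 with hm
  have hcast : (d : ℝ) - 1 = (m : ℝ) := by
    rw [hm, Nat.cast_sub hd, Nat.cast_one]
  have hrealkey : a * (ρ⁻¹) ^ ((d : ℝ) - 1) ≤ ε * (2 * s0) := by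
    rw [hcast, Real.rpow_natCast]
    have hcore := core_ineq d hd
    have hc0 : (d : ℝ) ≤ (d : ℝ) + 1 - (d : ℝ) * ε ^ 2 := by linarith
    have hsd : 0 < Real.sqrt d := Real.sqrt_pos.2 hd0
    have hsc : Real.sqrt d ≤ Real.sqrt ((d : ℝ) + 1 - (d : ℝ) * ε ^ 2) :=
      Real.sqrt_le_sqrt hc0
    have hscpos : 0 < Real.sqrt ((d : ℝ) + 1 - (d : ℝ) * ε ^ 2) := lt_of_lt_of_le hsd hsc
    have h1 : a ≤ ε * (Real.sqrt d)⁻¹ := by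
      calc a ≤ ε / Real.sqrt ((d : ℝ) + 1 - (d : ℝ) * ε ^ 2) := ha
        _ = ε * (Real.sqrt ((d : ℝ) + 1 - (d : ℝ) * ε ^ 2))⁻¹ := by ring
        _ ≤ ε * (Real.sqrt d)⁻¹ := by
            refine mul_le_mul_of_nonneg_left ?_ hε0.le
            exact inv_anti₀ hsd hsc
    have h2 : a ≤ ε * (2 * s0 * ρ ^ m) := by
      refine h1.trans ?_
      refine mul_le_mul_of_nonneg_left ?_ hε0.le
      calc (Real.sqrt d)⁻¹
          ≤ 2 * (Real.sqrt ((d : ℝ) + 1))⁻¹ *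
            Real.sqrt ((d : ℝ) / ((d : ℝ) + 1)) ^ (d - 1) := hcore
        _ = 2 * s0 * ρ ^ m := by rw [hs0def, hρdef, hm]
    have hρm : (0 : ℝ) < ρ ^ m := by positivity
    calc a * (ρ⁻¹) ^ m = a * (ρ ^ m)⁻¹ := by rw [inv_pow]
      _ ≤ (ε * (2 * s0 * ρ ^ m)) * (ρ ^ m)⁻¹ :=
          mul_le_mul_of_nonneg_right h2 (by positivity)
      _ = ε * (2 * s0) := by field_simp
  -- ENNReal coefficient inequality
  have hcoeff : ENNReal.ofReal a * (K : ℝ≥0∞) ^ ((d : ℝ) - 1) ≤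
      ENNReal.ofReal ε * (2 * ENNReal.ofReal s0) := by
    have hKof : (K : ℝ≥0∞) = ENNReal.ofReal ρ⁻¹ := rfl
    rw [hKof, ENNReal.ofReal_rpow_of_pos (by positivity), ← ENNReal.ofReal_mul ha0]
    have h2 : (2 : ℝ≥0∞) = ENNReal.ofReal (2 : ℝ) := by
      rw [ENNReal.ofReal_ofNat]
    rw [h2, ← ENNReal.ofReal_mul (by norm_num), ← ENNReal.ofReal_mul hε0.le]
    exact ENNReal.ofReal_le_ofReal hrealkey
  -- assemble
  have hkey : ENNReal.ofReal a * X ≤ ENNReal.ofReal ε * Y := by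
    calc ENNReal.ofReal a * X
        ≤ ENNReal.ofReal a * ((K : ℝ≥0∞) ^ ((d : ℝ) - 1) * μH[(d : ℝ) - 1] Bset) :=
          _root_.mul_le_mul_right hXB _
      _ = (ENNReal.ofReal a * (K : ℝ≥0∞) ^ ((d : ℝ) - 1)) * μH[(d : ℝ) - 1] Bset := by
          rw [mul_assoc]
      _ ≤ (ENNReal.ofReal ε * (2 * ENNReal.ofReal s0)) * μH[(d : ℝ) - 1] Bset :=
          _root_.mul_le_mul_left hcoeff _
      _ = ENNReal.ofReal ε * (ENNReal.ofReal s0 * μH[(d : ℝ) - 1] Bset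
            + ENNReal.ofReal s0 * μH[(d : ℝ) - 1] Bset) := by
          ring
      _ ≤ ENNReal.ofReal ε * (μH[(d : ℝ)] Apos + μH[(d : ℝ)] Aneg) :=
          _root_.mul_le_mul_right (add_le_add hBpos hBneg) _
      _ ≤ ENNReal.ofReal ε * Y := _root_.mul_le_mul_right hYlb _
  -- conclude, dividing by `Y`
  have hεne0 : ENNReal.ofReal ε ≠ 0 := by
    simp [ENNReal.ofReal_eq_zero, not_le, hε0]
  rw [ENNReal.div_le_iff_le_mul (Or.inr ENNReal.ofReal_ne_top) (Or.inr hεne0)]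
  exact hkey
end
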